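/- arXiv:1208.3097 — 8 statements merged into one kernel-verified Lean document; each statement's English description precedes it below -/
import Mathlib

section
/- Let k be a field, V and W finite-dimensional k-vector spaces, and n ≥ 0. For 0 ≤ i ≤ n let π_i : (V ⊕ W)^{⊗n} → V^{⊗i} ⊗ W^{⊗(n−i)} be the k-linear map determined on pure tensors z_1 ⊗ … ⊗ z_n with z_j = (v_j, w_j) ∈ V ⊕ W by π_i(z_1 ⊗ … ⊗ z_n) = v_1 ⊗ … ⊗ v_i ⊗ w_{i+1} ⊗ … ⊗ w_n. Then the map x ↦ (π_0(x), …, π_n(x)) restricts to a k-linear isomorphism from Γⁿ(V ⊕ W) onto the direct sum ⊕_{i=0}^{n} Γⁱ(V) ⊗ Γ^{n−i}(W), where Γⁱ(V) ⊗ Γ^{n−i}(W) is viewed as a subspace of V^{⊗i} ⊗ W^{⊗(n−i)}. -/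
open scoped TensorProduct
open PiTensorProduct

/-- The action of a permutation `σ ∈ S_n` on the `n`-th tensor power `V^{⊗n}`,
permuting the tensor factors. -/
noncomputable def permAction (k : Type*) [CommSemiring k] (V : Type*) [AddCommGroup V]
    [Module k V] {n : ℕ} (σ : Equiv.Perm (Fin n)) :
    (⨂[k]^n V) ≃ₗ[k] (⨂[k]^n V) :=
  PiTensorProduct.reindex k (fun _ => V) σ

/-- The `n`-th divided power `Γⁿ(V)`: the subspace of `S_n`-invariant tensors in the
`n`-th tensor power `V^{⊗n}`. -/
noncomputable def dividedPower (k : Type*) [CommSemiring k] (V : Type*) [AddCommGroup V]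
    [Module k V] (n : ℕ) : Submodule k (⨂[k]^n V) :=
  ⨅ σ : Equiv.Perm (Fin n), LinearMap.eqLocus (permAction k V σ).toLinearMap LinearMap.id

namespace DPexp

open Finset
set_option linter.unusedSectionVars false

variable {k : Type*} [Field k]

section coords

variable {V : Type*} [AddCommGroup V] [Module k V]
  {ι : Type*} [Fintype ι] [DecidableEq ι] (b : Module.Basis ι k V) {m : ℕ}

noncomputable def elt (f : Fin m → ι) : ⨂[k]^m V := PiTensorProduct.tprod k fun j => b (f j)

noncomputable def coef (f : Fin m → ι) : (⨂[k]^m V) →ₗ[k] k :=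
  PiTensorProduct.lift
    ((MultilinearMap.mkPiAlgebra k (Fin m) k).compLinearMap fun j => b.coord (f j))

lemma coef_tprod (f : Fin m → ι) (z : Fin m → V) :
    coef b f (PiTensorProduct.tprod k z) = ∏ j, b.repr (z j) (f j) := by
  simp [coef, Module.Basis.coord_apply]

lemma coef_elt (f g : Fin m → ι) :
    coef b f (elt b g) = if g = f then 1 else 0 := by
  rw [elt, coef_tprod]
  by_cases h : g = f
  · subst h; simp
  · rw [if_neg h]
    obtain ⟨j, hj⟩ := Function.ne_iff.mp h
    refine Finset.prod_eq_zero (mem_univ j) ?_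
    simp [Module.Basis.repr_self, Finsupp.single_apply, hj]

lemma expand (x : ⨂[k]^m V) :
    ∑ f : Fin m → ι, coef b f x • elt b f = x := by
  have key : ∀ z : Fin m → V,
      (PiTensorProduct.tprod k) z
        = ∑ f : Fin m → ι, (∏ j, b.repr (z j) (f j)) • elt b f := by
    intro z
    calc (PiTensorProduct.tprod k (s := fun _ : Fin m => V)) z
        = (PiTensorProduct.tprod k) (fun j => ∑ a : ι, b.repr (z j) a • b a) := by
          congr 1; funext j; rw [Module.Basis.sum_repr]
      _ = ∑ f : Fin m → ι, (PiTensorProduct.tprod k) (fun j => b.repr (z j) (f j) • b (f j)) :=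
          MultilinearMap.map_sum _ _
      _ = _ := by
          refine Finset.sum_congr rfl fun f _ => ?_
          rw [MultilinearMap.map_smul_univ]; rfl
  have hL : (∑ f : Fin m → ι,
      (LinearMap.toSpanSingleton k _ (elt b f)).comp (coef b f))
      = (LinearMap.id : (⨂[k]^m V) →ₗ[k] _) := by
    apply PiTensorProduct.ext
    apply MultilinearMap.ext
    intro z
    simp only [LinearMap.compMultilinearMap_apply, LinearMap.sum_apply, LinearMap.comp_apply,
      LinearMap.toSpanSingleton_apply, LinearMap.id_apply]
    conv_rhs => rw [key z]
    exact Finset.sum_congr rfl fun f _ => by rw [coef_tprod]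
  have := LinearMap.congr_fun hL x
  simpa using this

lemma eq_of_coef {x y : ⨂[k]^m V} (h : ∀ f, coef b f x = coef b f y) : x = y := by
  rw [← expand b x, ← expand b y]
  exact Finset.sum_congr rfl fun f _ => by rw [h]

lemma apply_eq_of_elt {E : Type*} [AddCommGroup E] [Module k E]
    {φ ψ : (⨂[k]^m V) →ₗ[k] E} (h : ∀ g, φ (elt b g) = ψ (elt b g)) (x : ⨂[k]^m V) :
    φ x = ψ x := by
  rw [← expand b x, map_sum, map_sum]
  exact Finset.sum_congr rfl fun f _ => by rw [map_smul, map_smul, h]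

lemma coef_permAction (σ : Equiv.Perm (Fin m)) (f : Fin m → ι) (x : ⨂[k]^m V) :
    coef b f (permAction k V σ x) = coef b (f ∘ ⇑σ) x := by
  refine apply_eq_of_elt b (φ := (coef b f).comp (permAction k V σ).toLinearMap)
    (ψ := coef b (f ∘ ⇑σ)) (fun g => ?_) x
  simp only [LinearMap.comp_apply, LinearEquiv.coe_coe]
  have h1 : permAction k V σ (elt b g) = elt b (g ∘ ⇑σ.symm) := by
    rw [permAction, elt, PiTensorProduct.reindex_tprod]; rfl
  rw [h1, coef_elt, coef_elt]
  have h2 : (g ∘ ⇑σ.symm = f) ↔ (g = f ∘ ⇑σ) := by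
    constructor
    · rintro rfl; funext j; simp
    · rintro rfl; funext j; simp
  simp only [h2]

lemma mem_dividedPower_iff (x : ⨂[k]^m V) :
    x ∈ dividedPower k V m ↔ ∀ (σ : Equiv.Perm (Fin m)) (f : Fin m → ι),
      coef b (f ∘ ⇑σ) x = coef b f x := by
  simp only [dividedPower, Submodule.mem_iInf, LinearMap.mem_eqLocus,
    LinearEquiv.coe_coe, LinearMap.id_apply]
  constructor
  · intro h σ f
    conv_rhs => rw [← h σ]
    rw [coef_permAction]
  · intro h σ
    apply eq_of_coef b
    intro f
    rw [coef_permAction]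
    exact h σ f

end coords

section mu

variable {α : Type*} {m : ℕ}

def mu (u : Fin m → α) : Multiset α := (List.ofFn u : Multiset α)

lemma mu_comp_perm (u : Fin m → α) (σ : Equiv.Perm (Fin m)) : mu (u ∘ ⇑σ) = mu u :=
  Multiset.coe_eq_coe.mpr (σ.ofFn_comp_perm u)

variable [LinearOrder α]

noncomputable def rho (u : Fin m → α) : Fin m → α := u ∘ ⇑(Tuple.sort u)

lemma rho_comp_perm (u : Fin m → α) (σ : Equiv.Perm (Fin m)) : rho (u ∘ ⇑σ) = rho u :=
  Tuple.comp_perm_comp_sort_eq_comp_sort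

lemma mu_rho (u : Fin m → α) : mu (rho u) = mu u := mu_comp_perm u _

lemma rho_idem (u : Fin m → α) : rho (rho u) = rho u := rho_comp_perm u _

lemma rho_eq_of_mu_eq {u v : Fin m → α} (h : mu u = mu v) : rho u = rho v :=
  List.ofFn_injective <|
    List.Perm.eq_of_sortedLE
      (Tuple.monotone_sort u).sortedLE_ofFn (Tuple.monotone_sort v).sortedLE_ofFn
      (Multiset.coe_eq_coe.mp (show mu (rho u) = mu (rho v) by
        rw [mu_rho, mu_rho, h]))

lemma exists_comp_perm_eq_of_mu_eq {u v : Fin m → α} (h : mu u = mu v) :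
    ∃ σ : Equiv.Perm (Fin m), u ∘ ⇑σ = v := by
  refine ⟨(Tuple.sort v).symm.trans (Tuple.sort u), funext fun j => ?_⟩
  have h1 := congrFun (rho_eq_of_mu_eq h) ((Tuple.sort v).symm j)
  simp only [rho, Function.comp_apply] at h1
  simpa using h1

end mu

section boolmono

lemma monotone_bool_iff {m : ℕ} (s : Fin m → Bool) (hs : Monotone s) (j : Fin m) :
    s j = false ↔ (j : ℕ) < (univ.filter fun j' => s j' = false).card := by
  constructor
  · intro hj
    have hsub : Finset.Iic j ⊆ univ.filter fun j' => s j' = false := by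
      intro j' hj'
      rw [Finset.mem_Iic] at hj'
      rw [Finset.mem_filter]
      refine ⟨mem_univ _, ?_⟩
      have := hs hj'
      rw [hj] at this
      exact le_antisymm this (Bool.false_le _)
    have := Finset.card_le_card hsub
    rw [Fin.card_Iic] at this
    omega
  · intro hj
    by_contra hsj
    rw [Bool.not_eq_false] at hsj
    have hsub : (univ.filter fun j' => s j' = false) ⊆ Finset.Iio j := by
      intro j' hj'
      rw [Finset.mem_filter] at hj'
      rw [Finset.mem_Iio]
      by_contra hle
      push_neg at hle
      have := hs hle
      rw [hsj, hj'.2] at this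
      exact absurd this (by decide)
    have := Finset.card_le_card hsub
    rw [Fin.card_Iio] at this
    omega

end boolmono

section cnt

variable {β γ : Type*} {n : ℕ}

def cnt (g : Fin n → β ⊕ γ) : ℕ := (univ.filter fun j => (g j).isLeft = true).card

lemma cnt_le (g : Fin n → β ⊕ γ) : cnt g ≤ n :=
  le_trans (Finset.card_filter_le _ _) (by simp)

lemma cnt_comp_perm (g : Fin n → β ⊕ γ) (θ : Equiv.Perm (Fin n)) : cnt (g ∘ ⇑θ) = cnt g := by
  refine Finset.card_bij' (fun j _ => θ j) (fun j _ => θ.symm j) ?_ ?_ ?_ ?_ <;>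
    simp [Function.comp]

end cnt

section join

variable {ιV ιW : Type*} {n iv : ℕ}

def join (n iv : ℕ) (hi : iv ≤ n) (p : Fin iv → ιV) (q : Fin (n - iv) → ιW) :
    Fin n → ιV ⊕ ιW :=
  fun j => if h : (j : ℕ) < iv then Sum.inl (p ⟨j, h⟩)
    else Sum.inr (q ⟨(j : ℕ) - iv, by omega⟩)

def sumE (n iv : ℕ) (hi : iv ≤ n) : Fin iv ⊕ Fin (n - iv) ≃ Fin n :=
  finSumFinEquiv.trans (finCongr (by omega))

lemma sumE_inl (hi : iv ≤ n) (s : Fin iv) : ((sumE n iv hi) (Sum.inl s) : ℕ) = s := by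
  simp [sumE]

lemma sumE_inr (hi : iv ≤ n) (s : Fin (n - iv)) :
    ((sumE n iv hi) (Sum.inr s) : ℕ) = iv + s := by
  simp [sumE]

lemma join_sumE_inl (hi : iv ≤ n) (p : Fin iv → ιV) (q : Fin (n - iv) → ιW) (s : Fin iv) :
    join n iv hi p q (sumE n iv hi (Sum.inl s)) = Sum.inl (p s) := by
  have h1 : ((sumE n iv hi) (Sum.inl s) : ℕ) = (s : ℕ) := sumE_inl hi s
  have h2 : (s : ℕ) < iv := s.isLt
  rw [join, dif_pos (show ((sumE n iv hi) (Sum.inl s) : ℕ) < iv by omega)]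
  exact congrArg (fun t => (Sum.inl (p t) : ιV ⊕ ιW)) (Fin.ext h1)

lemma join_sumE_inr (hi : iv ≤ n) (p : Fin iv → ιV) (q : Fin (n - iv) → ιW) (s : Fin (n - iv)) :
    join n iv hi p q (sumE n iv hi (Sum.inr s)) = Sum.inr (q s) := by
  have h1 : ((sumE n iv hi) (Sum.inr s) : ℕ) = iv + (s : ℕ) := sumE_inr hi s
  rw [join, dif_neg (show ¬ ((sumE n iv hi) (Sum.inr s) : ℕ) < iv by omega)]
  exact congrArg (fun t => (Sum.inr (q t) : ιV ⊕ ιW))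
    (Fin.ext (show ((sumE n iv hi) (Sum.inr s) : ℕ) - iv = (s : ℕ) by omega))

lemma join_inj (hi : iv ≤ n) {p p' : Fin iv → ιV} {q q' : Fin (n - iv) → ιW} :
    join n iv hi p q = join n iv hi p' q' ↔ p = p' ∧ q = q' := by
  constructor
  · intro h
    constructor
    · funext s
      have h1 := congrFun h (sumE n iv hi (Sum.inl s))
      rw [join_sumE_inl, join_sumE_inl] at h1
      exact Sum.inl.inj h1
    · funext s
      have h1 := congrFun h (sumE n iv hi (Sum.inr s))
      rw [join_sumE_inr, join_sumE_inr] at h1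
      exact Sum.inr.inj h1
  · rintro ⟨rfl, rfl⟩; rfl

lemma join_comp_blockPerm (hi : iv ≤ n) (p : Fin iv → ιV) (q : Fin (n - iv) → ιW)
    (σ : Equiv.Perm (Fin iv)) (τ : Equiv.Perm (Fin (n - iv))) :
    ∃ P : Equiv.Perm (Fin n),
      join n iv hi p q ∘ ⇑P = join n iv hi (p ∘ ⇑σ) (q ∘ ⇑τ) := by
  refine ⟨(sumE n iv hi).permCongr (Equiv.sumCongr σ τ), funext fun j => ?_⟩
  obtain ⟨x, rfl⟩ := (sumE n iv hi).surjective j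
  cases x with
  | inl s =>
    rw [Function.comp_apply, Equiv.permCongr_apply, Equiv.symm_apply_apply]
    simp only [Equiv.sumCongr_apply, Sum.map_inl]
    rw [join_sumE_inl, join_sumE_inl]
    rfl
  | inr s =>
    rw [Function.comp_apply, Equiv.permCongr_apply, Equiv.symm_apply_apply]
    simp only [Equiv.sumCongr_apply, Sum.map_inr]
    rw [join_sumE_inr, join_sumE_inr]
    rfl

lemma exists_block_of_join_comp_perm (hi : iv ≤ n) (p p' : Fin iv → ιV)
    (q q' : Fin (n - iv) → ιW) (P : Equiv.Perm (Fin n))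
    (h : join n iv hi p q ∘ ⇑P = join n iv hi p' q') :
    (∃ σ : Equiv.Perm (Fin iv), p ∘ ⇑σ = p') ∧
      (∃ τ : Equiv.Perm (Fin (n - iv)), q ∘ ⇑τ = q') := by
  constructor
  · have hF : ∀ s : Fin iv, ∃ t, P (sumE n iv hi (Sum.inl s)) = sumE n iv hi (Sum.inl t) := by
      intro s
      obtain ⟨x, hx⟩ := (sumE n iv hi).surjective (P (sumE n iv hi (Sum.inl s)))
      cases x with
      | inl t => exact ⟨t, hx.symm⟩
      | inr t =>
        exfalso
        have h1 := congrFun h (sumE n iv hi (Sum.inl s))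
        rw [Function.comp_apply, ← hx, join_sumE_inr, join_sumE_inl] at h1
        exact Sum.inr_ne_inl h1
    choose F hF using hF
    have hinj : Function.Injective F := by
      intro s s' hss
      have := hF s ▸ hss ▸ hF s'
      have h2 : P (sumE n iv hi (Sum.inl s)) = P (sumE n iv hi (Sum.inl s')) := by
        rw [hF s, hF s', hss]
      have h3 := P.injective h2
      have h4 := (sumE n iv hi).injective h3
      exact Sum.inl.inj h4
    refine ⟨Equiv.ofBijective F (Finite.injective_iff_bijective.mp hinj), funext fun s => ?_⟩
    have h1 := congrFun h (sumE n iv hi (Sum.inl s))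
    rw [Function.comp_apply, hF s, join_sumE_inl, join_sumE_inl] at h1
    exact Sum.inl.inj h1
  · have hF : ∀ s : Fin (n - iv), ∃ t,
        P (sumE n iv hi (Sum.inr s)) = sumE n iv hi (Sum.inr t) := by
      intro s
      obtain ⟨x, hx⟩ := (sumE n iv hi).surjective (P (sumE n iv hi (Sum.inr s)))
      cases x with
      | inr t => exact ⟨t, hx.symm⟩
      | inl t =>
        exfalso
        have h1 := congrFun h (sumE n iv hi (Sum.inr s))
        rw [Function.comp_apply, ← hx, join_sumE_inl, join_sumE_inr] at h1
        exact Sum.inl_ne_inr h1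
    choose F hF using hF
    have hinj : Function.Injective F := by
      intro s s' hss
      have h2 : P (sumE n iv hi (Sum.inr s)) = P (sumE n iv hi (Sum.inr s')) := by
        rw [hF s, hF s', hss]
      exact Sum.inr.inj ((sumE n iv hi).injective (P.injective h2))
    refine ⟨Equiv.ofBijective F (Finite.injective_iff_bijective.mp hinj), funext fun s => ?_⟩
    have h1 := congrFun h (sumE n iv hi (Sum.inr s))
    rw [Function.comp_apply, hF s, join_sumE_inr, join_sumE_inr] at h1
    exact Sum.inr.inj h1

lemma card_filter_lt (n iv : ℕ) (hi : iv ≤ n) :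
    (univ.filter fun j : Fin n => (j : ℕ) < iv).card = iv := by
  have : (univ.filter fun j : Fin n => (j : ℕ) < iv).card = (univ : Finset (Fin iv)).card := by
    refine Finset.card_bij' (fun j hj => ⟨(j : ℕ), (Finset.mem_filter.mp hj).2⟩)
      (fun s _ => ⟨(s : ℕ), lt_of_lt_of_le s.isLt hi⟩) ?_ ?_ ?_ ?_
    · intro a ha; exact mem_univ _
    · intro a ha
      rw [Finset.mem_filter]
      exact ⟨mem_univ _, a.isLt⟩
    · intro a ha; exact Fin.ext rfl
    · intro a ha; exact Fin.ext rfl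
  rw [this, Finset.card_univ, Fintype.card_fin]

lemma cnt_join (hi : iv ≤ n) (p : Fin iv → ιV) (q : Fin (n - iv) → ιW) :
    cnt (join n iv hi p q) = iv := by
  rw [cnt]
  rw [show (univ.filter fun j => (join n iv hi p q j).isLeft = true)
      = univ.filter fun j : Fin n => (j : ℕ) < iv from ?_]
  · exact card_filter_lt n iv hi
  · apply Finset.filter_congr
    intro j _
    rw [join]
    by_cases hj : (j : ℕ) < iv
    · simp [hj]
    · simp [hj]

lemma exists_sorted (g : Fin n → ιV ⊕ ιW) :
    ∃ (pq : (Fin (cnt g) → ιV) × (Fin (n - cnt g) → ιW)) (P : Equiv.Perm (Fin n)),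
      g ∘ ⇑P = join n (cnt g) (cnt_le g) pq.1 pq.2 := by
  classical
  set key : Fin n → Bool := fun j => (g j).isRight with hkey
  set σ := Tuple.sort key with hσ
  have hmono : Monotone (key ∘ ⇑σ) := Tuple.monotone_sort key
  have hcard : (univ.filter fun j => (key ∘ ⇑σ) j = false).card = cnt g := by
    have h1 : (univ.filter fun j => (key ∘ ⇑σ) j = false)
        = univ.filter fun j => ((g ∘ ⇑σ) j).isLeft = true := by
      apply Finset.filter_congr
      intro j _
      simp [hkey, Sum.isRight_eq_false, Function.comp]
    rw [h1]
    exact cnt_comp_perm g σ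
  have hiff : ∀ j : Fin n, (g (σ j)).isLeft = true ↔ (j : ℕ) < cnt g := by
    intro j
    rw [← hcard]
    have h2 := monotone_bool_iff (key ∘ ⇑σ) hmono j
    rw [← h2]
    simp [hkey, Sum.isRight_eq_false, Function.comp]
  have hL : ∀ s : Fin (cnt g), ∃ a, g (σ (Fin.castLE (cnt_le g) s)) = Sum.inl a := by
    intro s
    have h3 : (g (σ (Fin.castLE (cnt_le g) s))).isLeft = true :=
      (hiff _).mpr (by simpa using s.isLt)
    cases hgs : g (σ (Fin.castLE (cnt_le g) s)) with
    | inl a => exact ⟨a, rfl⟩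
    | inr c => rw [hgs] at h3; simp at h3
  have hR : ∀ s : Fin (n - cnt g), ∃ c,
      g (σ ⟨cnt g + (s : ℕ), by have := s.isLt; have := cnt_le g; omega⟩) = Sum.inr c := by
    intro s
    have h3 : ¬ ((g (σ ⟨cnt g + (s : ℕ), by have := s.isLt; have := cnt_le g; omega⟩)).isLeft
        = true) := by
      rw [hiff]
      simp
    cases hgs : g (σ ⟨cnt g + (s : ℕ), by have := s.isLt; have := cnt_le g; omega⟩) with
    | inr c => exact ⟨c, rfl⟩
    | inl a => rw [hgs] at h3; simp at h3
  choose p hp using hL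
  choose q hq using hR
  refine ⟨(p, q), σ, funext fun j => ?_⟩
  rw [Function.comp_apply, join]
  by_cases hj : (j : ℕ) < cnt g
  · rw [dif_pos hj]
    exact hp ⟨(j : ℕ), hj⟩
  · rw [dif_neg hj]
    have hj1 : cnt g ≤ (j : ℕ) := le_of_not_gt hj
    have hj3 : (j : ℕ) - cnt g < n - cnt g := by have := j.isLt; omega
    have h5 := hq ⟨(j : ℕ) - cnt g, hj3⟩
    have h6 : (⟨cnt g + ((j : ℕ) - cnt g),
        by have := j.isLt; have := cnt_le g; omega⟩ : Fin n) = j :=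
      Fin.ext (show cnt g + ((j : ℕ) - cnt g) = (j : ℕ) by omega)
    rw [show σ j = σ ⟨cnt g + ((j : ℕ) - cnt g),
        by have := j.isLt; have := cnt_le g; omega⟩ from congrArg σ h6.symm]
    exact h5

end join

section tensor

variable {V W : Type*} [AddCommGroup V] [Module k V] [AddCommGroup W] [Module k W]
  {ιV ιW : Type*} [Fintype ιV] [DecidableEq ιV] [Fintype ιW] [DecidableEq ιW]
  (bV : Module.Basis ιV k V) (bW : Module.Basis ιW k W) {m₁ m₂ : ℕ}

noncomputable def coefT (p : Fin m₁ → ιV) (q : Fin m₂ → ιW) :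
    ((⨂[k]^m₁ V) ⊗[k] (⨂[k]^m₂ W)) →ₗ[k] k :=
  (TensorProduct.lid k k).toLinearMap.comp (TensorProduct.map (coef bV p) (coef bW q))

lemma coefT_tmul (p : Fin m₁ → ιV) (q : Fin m₂ → ιW) (a : ⨂[k]^m₁ V) (c : ⨂[k]^m₂ W) :
    coefT bV bW p q (a ⊗ₜ[k] c) = coef bV p a * coef bW q c := by
  simp [coefT, TensorProduct.lid_tmul, smul_eq_mul]

lemma expandT (x : (⨂[k]^m₁ V) ⊗[k] (⨂[k]^m₂ W)) :
    ∑ p : Fin m₁ → ιV, ∑ q : Fin m₂ → ιW,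
      coefT bV bW p q x • (elt bV p ⊗ₜ[k] elt bW q) = x := by
  induction x using TensorProduct.induction_on with
  | zero => simp
  | tmul a c =>
    calc ∑ p : Fin m₁ → ιV, ∑ q : Fin m₂ → ιW,
          coefT bV bW p q (a ⊗ₜ[k] c) • (elt bV p ⊗ₜ[k] elt bW q)
        = ∑ p : Fin m₁ → ιV, ∑ q : Fin m₂ → ιW,
          (coef bV p a • elt bV p) ⊗ₜ[k] (coef bW q c • elt bW q) := by
          refine Finset.sum_congr rfl fun p _ => Finset.sum_congr rfl fun q _ => ?_
          rw [coefT_tmul, TensorProduct.smul_tmul_smul]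
      _ = ∑ p : Fin m₁ → ιV,
          (coef bV p a • elt bV p) ⊗ₜ[k] (∑ q : Fin m₂ → ιW, coef bW q c • elt bW q) := by
          refine Finset.sum_congr rfl fun p _ => ?_
          rw [TensorProduct.tmul_sum]
      _ = a ⊗ₜ[k] c := by
          rw [← TensorProduct.sum_tmul, expand, expand]
  | add u v hu hv =>
    simp only [map_add, add_smul, Finset.sum_add_distrib, hu, hv]

lemma eqT_of_coef {x y : (⨂[k]^m₁ V) ⊗[k] (⨂[k]^m₂ W)}
    (h : ∀ p q, coefT bV bW p q x = coefT bV bW p q y) : x = y := by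
  rw [← expandT bV bW x, ← expandT bV bW y]
  exact Finset.sum_congr rfl fun p _ => Finset.sum_congr rfl fun q _ => by rw [h]

lemma coefT_eq_of_mem_range {y : (⨂[k]^m₁ V) ⊗[k] (⨂[k]^m₂ W)}
    (hy : y ∈ LinearMap.range (TensorProduct.map
      (dividedPower k V m₁).subtype (dividedPower k W m₂).subtype))
    (σ : Equiv.Perm (Fin m₁)) (τ : Equiv.Perm (Fin m₂))
    (p : Fin m₁ → ιV) (q : Fin m₂ → ιW) :
    coefT bV bW (p ∘ ⇑σ) (q ∘ ⇑τ) y = coefT bV bW p q y := by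
  obtain ⟨t, rfl⟩ := hy
  induction t using TensorProduct.induction_on with
  | zero => simp
  | tmul a c =>
    rw [TensorProduct.map_tmul]
    rw [coefT_tmul, coefT_tmul]
    rw [Submodule.coe_subtype, Submodule.coe_subtype]
    rw [(mem_dividedPower_iff bV _).mp a.2 σ p, (mem_dividedPower_iff bW _).mp c.2 τ q]
  | add u v hu hv =>
    simp only [map_add, hu, hv]

lemma mem_range_of_coefT_invariant [LinearOrder ιW]
    {y : (⨂[k]^m₁ V) ⊗[k] (⨂[k]^m₂ W)}
    (h : ∀ (σ : Equiv.Perm (Fin m₁)) (τ : Equiv.Perm (Fin m₂)) p q,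
      coefT bV bW (p ∘ ⇑σ) (q ∘ ⇑τ) y = coefT bV bW p q y) :
    y ∈ LinearMap.range (TensorProduct.map
      (dividedPower k V m₁).subtype (dividedPower k W m₂).subtype) := by
  classical
  set s : (Fin m₂ → ιW) → ⨂[k]^m₁ V :=
    fun q => ∑ p, coefT bV bW p q y • elt bV p with hs
  have hcoef_s : ∀ q p', coef bV p' (s q) = coefT bV bW p' q y := by
    intro q p'
    rw [hs]
    rw [map_sum]
    simp only [map_smul, coef_elt, smul_eq_mul, mul_ite, mul_one, mul_zero]
    rw [Finset.sum_ite_eq' univ p' (fun p => coefT bV bW p q y)]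
    simp
  have hs_mem : ∀ q, s q ∈ dividedPower k V m₁ := by
    intro q
    rw [mem_dividedPower_iff bV]
    intro σ p
    rw [hcoef_s, hcoef_s]
    have h1 := h σ 1 p q
    simpa using h1
  have hs_const : ∀ q q', rho q = rho q' → s q = s q' := by
    intro q q' hqq
    have hmu : mu q = mu q' := by
      rw [← mu_rho q, ← mu_rho q', hqq]
    obtain ⟨τ, hτ⟩ := exists_comp_perm_eq_of_mu_eq hmu
    apply eq_of_coef bV
    intro p
    rw [hcoef_s, hcoef_s, ← hτ]
    have h1 := h 1 τ p q
    simpa using h1.symm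
  set o : (Fin m₂ → ιW) → ⨂[k]^m₂ W :=
    fun r => ∑ q ∈ univ.filter (fun q => rho q = r), elt bW q with ho
  have hcoef_o : ∀ r q', coef bW q' (o r) = if rho q' = r then 1 else 0 := by
    intro r q'
    rw [ho, map_sum]
    simp only [coef_elt]
    rw [Finset.sum_ite_eq' (univ.filter (fun q => rho q = r)) q' (fun _ => (1 : k))]
    simp
  have ho_mem : ∀ r, o r ∈ dividedPower k W m₂ := by
    intro r
    rw [mem_dividedPower_iff bW]
    intro τ q'
    rw [hcoef_o, hcoef_o]
    have h1 : rho (q' ∘ ⇑τ) = rho q' := rho_comp_perm q' τ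
    rw [h1]
  have hy : y = ∑ q : Fin m₂ → ιW, s q ⊗ₜ[k] elt bW q := by
    conv_lhs => rw [← expandT bV bW y]
    rw [Finset.sum_comm]
    refine Finset.sum_congr rfl fun q _ => ?_
    rw [hs, TensorProduct.sum_tmul]
    exact Finset.sum_congr rfl fun p _ => by rw [TensorProduct.smul_tmul']
  have hy2 : y = ∑ r : Fin m₂ → ιW, s r ⊗ₜ[k] o r := by
    rw [hy, ← Finset.sum_fiberwise_of_maps_to (g := rho)
      (fun q (_ : q ∈ univ) => mem_univ (rho q))
      (fun q => s q ⊗ₜ[k] elt bW q)]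
    refine Finset.sum_congr rfl fun r _ => ?_
    rw [ho, TensorProduct.tmul_sum]
    refine Finset.sum_congr rfl fun q hq => ?_
    have hq1 : rho q = r := (Finset.mem_filter.mp hq).2
    have hq2 : rho q = rho r := by rw [hq1, ← hq1, rho_idem, hq1]
    rw [hs_const q r hq2]
  rw [hy2]
  refine Submodule.sum_mem _ fun r _ => ?_
  exact ⟨(⟨s r, hs_mem r⟩ : dividedPower k V m₁) ⊗ₜ[k] (⟨o r, ho_mem r⟩ : dividedPower k W m₂),
    by rw [TensorProduct.map_tmul]; rfl⟩

end tensor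

section pi

variable {V W : Type*} [AddCommGroup V] [Module k V] [AddCommGroup W] [Module k W]
  {ιV ιW : Type*} [Fintype ιV] [DecidableEq ιV] [Fintype ιW] [DecidableEq ιW]
  (bV : Module.Basis ιV k V) (bW : Module.Basis ιW k W)

lemma coefT_pi {n iv : ℕ} (hi : iv ≤ n)
    (Φ : (⨂[k]^n (V × W)) →ₗ[k] (⨂[k]^iv V) ⊗[k] (⨂[k]^(n - iv) W))
    (hΦ : ∀ z : Fin n → V × W, Φ (PiTensorProduct.tprod k z) =
      (PiTensorProduct.tprod k fun j : Fin iv => (z (Fin.castLE hi j)).1) ⊗ₜ[k]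
      (PiTensorProduct.tprod k fun j : Fin (n - iv) =>
        (z ⟨iv + (j : ℕ), by have := j.isLt; omega⟩).2))
    (p : Fin iv → ιV) (q : Fin (n - iv) → ιW) (x : ⨂[k]^n (V × W)) :
    coefT bV bW p q (Φ x) = coef (bV.prod bW) (join n iv hi p q) x := by
  refine apply_eq_of_elt (bV.prod bW) (φ := (coefT bV bW p q).comp Φ)
    (ψ := coef (bV.prod bW) (join n iv hi p q)) (fun g => ?_) x
  rw [LinearMap.comp_apply]
  rw [elt, hΦ]
  by_cases hA : ∀ s : Fin iv, ∃ a, g (Fin.castLE hi s) = Sum.inl a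
  · by_cases hB : ∀ s : Fin (n - iv), ∃ c,
        g ⟨iv + (s : ℕ), by have := s.isLt; omega⟩ = Sum.inr c
    · choose p' hp' using hA
      choose q' hq' using hB
      have hg : g = join n iv hi p' q' := by
        funext j
        rw [join]
        by_cases hj : (j : ℕ) < iv
        · rw [dif_pos hj]
          exact hp' ⟨(j : ℕ), hj⟩
        · rw [dif_neg hj]
          have hj3 : (j : ℕ) - iv < n - iv := by have := j.isLt; omega
          have h5 := hq' ⟨(j : ℕ) - iv, hj3⟩
          have h6 : (⟨iv + ((j : ℕ) - iv),
              by have := j.isLt; omega⟩ : Fin n) = j :=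
            Fin.ext (show iv + ((j : ℕ) - iv) = (j : ℕ) by omega)
          rw [h6] at h5
          exact h5
      have h1 : (fun s : Fin iv => ((bV.prod bW) (g (Fin.castLE hi s))).1)
          = fun s => bV (p' s) := by
        funext s
        rw [hp' s, Module.Basis.prod_apply_inl_fst]
      have h2 : (fun s : Fin (n - iv) =>
            ((bV.prod bW) (g ⟨iv + (s : ℕ), by have := s.isLt; omega⟩)).2)
          = fun s => bW (q' s) := by
        funext s
        rw [hq' s, Module.Basis.prod_apply_inr_snd]
      rw [h1, h2]
      rw [show (PiTensorProduct.tprod k fun s => bV (p' s)) = elt bV p' from rfl,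
        show (PiTensorProduct.tprod k fun s => bW (q' s)) = elt bW q' from rfl]
      rw [show (PiTensorProduct.tprod k fun j => (bV.prod bW) (g j)) = elt (bV.prod bW) g from
        rfl]
      rw [coefT_tmul, coef_elt, coef_elt, coef_elt, hg]
      rcases eq_or_ne p' p with rfl | hpp
      · rcases eq_or_ne q' q with rfl | hqq
        · simp
        · rw [if_neg hqq, if_neg (fun hc => hqq ((join_inj hi).mp hc).2), mul_zero]
      · rw [if_neg hpp, if_neg (fun hc => hpp ((join_inj hi).mp hc).1), zero_mul]
    · push_neg at hB
      obtain ⟨s, hs⟩ := hB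
      have hz : ((bV.prod bW) (g ⟨iv + (s : ℕ), by have := s.isLt; omega⟩)).2 = 0 := by
        cases hgs : g ⟨iv + (s : ℕ), by have := s.isLt; omega⟩ with
        | inl a => rw [Module.Basis.prod_apply_inl_snd]
        | inr c => exact absurd hgs (hs c)
      have hz2 : (PiTensorProduct.tprod k (s := fun _ : Fin (n - iv) => W) fun j =>
          ((bV.prod bW) (g ⟨iv + (j : ℕ), by have := j.isLt; omega⟩)).2) = 0 :=
        MultilinearMap.map_coord_zero _ s hz
      rw [hz2, TensorProduct.tmul_zero, map_zero]
      rw [show (PiTensorProduct.tprod k fun j => (bV.prod bW) (g j)) = elt (bV.prod bW) g from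
        rfl]
      rw [coef_elt]
      rw [if_neg]
      intro hc
      have := congrFun hc ⟨iv + (s : ℕ), by have := s.isLt; omega⟩
      rw [join, dif_neg (by simp)] at this
      exact (hs _) this
  · push_neg at hA
    obtain ⟨s, hs⟩ := hA
    have hz : ((bV.prod bW) (g (Fin.castLE hi s))).1 = 0 := by
      cases hgs : g (Fin.castLE hi s) with
      | inr c => rw [Module.Basis.prod_apply_inr_fst]
      | inl a => exact absurd hgs (hs a)
    have hz2 : (PiTensorProduct.tprod k (s := fun _ : Fin iv => V) fun j =>
        ((bV.prod bW) (g (Fin.castLE hi j))).1) = 0 :=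
      MultilinearMap.map_coord_zero _ s hz
    rw [hz2, TensorProduct.zero_tmul, map_zero]
    rw [show (PiTensorProduct.tprod k fun j => (bV.prod bW) (g j)) = elt (bV.prod bW) g from
      rfl]
    rw [coef_elt]
    rw [if_neg]
    intro hc
    have := congrFun hc (Fin.castLE hi s)
    rw [join, dif_pos (by simpa using s.isLt)] at this
    exact (hs _) (by simpa using this)

end pi

end DPexp

open DPexp Finset in
/-- exponential property of divided powers: for finite-dimensional vector
spaces `V, W` over a field `k` and `n ≥ 0`, the maps `π i` sending a pure tensor
`z₁ ⊗ ⋯ ⊗ zₙ` in `(V ⊕ W)^{⊗n}` (with `z_j = (v_j, w_j)`) to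
`v₁ ⊗ ⋯ ⊗ v_i ⊗ w_{i+1} ⊗ ⋯ ⊗ w_n` assemble to a `k`-linear isomorphism from
`Γⁿ(V ⊕ W)` onto `⊕_{i=0}^{n} Γⁱ(V) ⊗ Γ^{n-i}(W)`, where `Γⁱ(V) ⊗ Γ^{n-i}(W)` is viewed
as a subspace of `V^{⊗i} ⊗ W^{⊗(n-i)}`. -/
theorem stmt_1 {k : Type*} [Field k] (V W : Type*)
    [AddCommGroup V] [Module k V] [AddCommGroup W] [Module k W]
    [FiniteDimensional k V] [FiniteDimensional k W] (n : ℕ)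
    (π : ∀ i : Fin (n + 1),
      (⨂[k]^n (V × W)) →ₗ[k] (⨂[k]^(i : ℕ) V) ⊗[k] (⨂[k]^(n - (i : ℕ)) W))
    (hπ : ∀ (i : Fin (n + 1)) (z : Fin n → V × W),
      π i (PiTensorProduct.tprod k z) =
        (PiTensorProduct.tprod k fun j : Fin (i : ℕ) => (z (Fin.castLE i.is_le j)).1)
          ⊗ₜ[k]
        (PiTensorProduct.tprod k fun j : Fin (n - (i : ℕ)) =>
          (z ⟨(i : ℕ) + (j : ℕ), by have := j.isLt; have := i.is_le; omega⟩).2)) :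
    Set.InjOn (fun x => fun i : Fin (n + 1) => π i x)
      (dividedPower k (V × W) n : Set (⨂[k]^n (V × W))) ∧
    (fun x => fun i : Fin (n + 1) => π i x) '' (dividedPower k (V × W) n) =
      {f : ∀ i : Fin (n + 1), (⨂[k]^(i : ℕ) V) ⊗[k] (⨂[k]^(n - (i : ℕ)) W) |
        ∀ i : Fin (n + 1), f i ∈ LinearMap.range
          (TensorProduct.map (dividedPower k V (i : ℕ)).subtype
            (dividedPower k W (n - (i : ℕ))).subtype)} := by
  classical
  set bV := Module.finBasis k V with hbV
  set bW := Module.finBasis k W with hbW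
  set bP := bV.prod bW with hbP
  constructor
  · -- Injectivity
    rintro x hx y hy hxy
    rw [SetLike.mem_coe] at hx hy
    apply eq_of_coef bP
    intro g
    obtain ⟨⟨p, q⟩, P, hPg⟩ := exists_sorted g
    have key : ∀ z : ⨂[k]^n (V × W), z ∈ dividedPower k (V × W) n →
        coef bP g z = coefT bV bW p q (π ⟨cnt g, Nat.lt_succ_of_le (cnt_le g)⟩ z) := by
      intro z hz
      calc coef bP g z = coef bP (g ∘ ⇑P) z := ((mem_dividedPower_iff bP z).mp hz P g).symm
        _ = coef bP (join n (cnt g) (cnt_le g) p q) z := by rw [hPg]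
        _ = coefT bV bW p q (π ⟨cnt g, Nat.lt_succ_of_le (cnt_le g)⟩ z) :=
          (coefT_pi bV bW (cnt_le g) _ (hπ ⟨cnt g, Nat.lt_succ_of_le (cnt_le g)⟩) p q z).symm
    rw [key x hx, key y hy]
    exact congrArg (coefT bV bW p q) (congrFun hxy ⟨cnt g, Nat.lt_succ_of_le (cnt_le g)⟩)
  · -- Image
    ext f
    constructor
    · rintro ⟨x, hx, rfl⟩
      rw [SetLike.mem_coe] at hx
      intro i
      apply mem_range_of_coefT_invariant bV bW
      intro σ τ p q
      rw [coefT_pi bV bW i.is_le (π i) (hπ i), coefT_pi bV bW i.is_le (π i) (hπ i)]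
      obtain ⟨P, hP⟩ := join_comp_blockPerm i.is_le p q σ τ
      rw [← hP]
      exact (mem_dividedPower_iff bP x).mp hx P _
    · intro hf
      simp only [Set.mem_setOf_eq] at hf
      have hfinv : ∀ (i : Fin (n + 1)) (σ : Equiv.Perm (Fin (i : ℕ)))
          (τ : Equiv.Perm (Fin (n - (i : ℕ)))) p q,
          coefT bV bW (p ∘ ⇑σ) (q ∘ ⇑τ) (f i) = coefT bV bW p q (f i) :=
        fun i => coefT_eq_of_mem_range bV bW (hf i)
      set C : (Fin n → Fin (Module.finrank k V) ⊕ Fin (Module.finrank k W)) → k := fun g =>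
        coefT bV bW (exists_sorted g).choose.1 (exists_sorted g).choose.2
          (f ⟨cnt g, Nat.lt_succ_of_le (cnt_le g)⟩) with hC
      have hCspec : ∀ (g : Fin n → Fin (Module.finrank k V) ⊕ Fin (Module.finrank k W))
          (i : ℕ) (hi : i ≤ n) (hi' : i < n + 1) (p : Fin i → Fin (Module.finrank k V))
          (q : Fin (n - i) → Fin (Module.finrank k W)) (P : Equiv.Perm (Fin n)),
          g ∘ ⇑P = join n i hi p q → C g = coefT bV bW p q (f ⟨i, hi'⟩) := by
        intro g i hi hi' p q P hP
        obtain ⟨P₀, hP₀⟩ := (exists_sorted g).choose_spec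
        have hcnt : cnt g = i := by
          have h1 : cnt (g ∘ ⇑P) = cnt g := cnt_comp_perm g P
          rw [hP, cnt_join] at h1
          exact h1.symm
        subst hcnt
        have hg1 : join n (cnt g) hi p q ∘ ⇑P.symm = g := by
          funext j
          rw [← hP]
          simp
        have hrel : join n (cnt g) hi p q ∘ (⇑P.symm ∘ ⇑P₀)
            = join n (cnt g) (cnt_le g) (exists_sorted g).choose.1 (exists_sorted g).choose.2 := by
          rw [← Function.comp_assoc, hg1, hP₀]
        have hrel2 : join n (cnt g) hi p q ∘ ⇑(P₀.trans P.symm)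
            = join n (cnt g) (cnt_le g) (exists_sorted g).choose.1 (exists_sorted g).choose.2 := by
          rw [Equiv.coe_trans]
          exact hrel
        obtain ⟨⟨σ, hσ⟩, ⟨τ, hτ⟩⟩ := exists_block_of_join_comp_perm hi _ _ _ _ _ hrel2
        simp only [hC]
        rw [← hσ, ← hτ]
        exact hfinv ⟨cnt g, hi'⟩ σ τ p q
      set x : ⨂[k]^n (V × W) := ∑ g, C g • elt bP g with hxdef
      have hcoefx : ∀ g, coef bP g x = C g := by
        intro g
        rw [hxdef, map_sum]
        simp only [map_smul, coef_elt, smul_eq_mul, mul_ite, mul_one, mul_zero]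
        rw [Finset.sum_ite_eq' univ g C]
        simp
      have hxmem : x ∈ dividedPower k (V × W) n := by
        rw [mem_dividedPower_iff bP]
        intro θ g
        rw [hcoefx, hcoefx]
        obtain ⟨pq, P, hP⟩ := exists_sorted g
        have h1 := hCspec g (cnt g) (cnt_le g) (Nat.lt_succ_of_le (cnt_le g)) pq.1 pq.2 P hP
        have h2 := hCspec (g ∘ ⇑θ) (cnt g) (cnt_le g) (Nat.lt_succ_of_le (cnt_le g)) pq.1 pq.2
          (P.trans θ.symm) ?_
        · rw [h1, h2]
        · rw [Equiv.coe_trans, ← Function.comp_assoc]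
          have : (g ∘ ⇑θ) ∘ ⇑θ.symm = g := by
            funext j; simp
          rw [this, hP]
      refine ⟨x, SetLike.mem_coe.mpr hxmem, ?_⟩
      funext i
      apply eqT_of_coef bV bW
      intro p q
      rw [coefT_pi bV bW i.is_le (π i) (hπ i), hcoefx]
      have h3 := hCspec (join n (i : ℕ) i.is_le p q) (i : ℕ) i.is_le i.isLt p q 1 ?_
      · rw [h3]
      · funext j
        simp
end

section
/- Let k be an infinite field, n ≥ 1, d ≥ 1, and let e_1, …, e_n be the standard basis of kⁿ. For t = (t_1, …, t_n) ∈ (kˣ)ⁿ let diag(t) ∈ GL_n(k) be the corresponding diagonal matrix, acting on (kⁿ)^{⊗d} by diag(t)·(v_1 ⊗ … ⊗ v_d) = (diag(t) v_1) ⊗ … ⊗ (diag(t) v_d). Let λ : {1, …, n} → ℕ satisfy λ_1 + … + λ_n = d. Then the subspace W_λ = {x ∈ Γᵈ(kⁿ) : for all t ∈ (kˣ)ⁿ, diag(t)·x = (∏_{i=1}^{n} t_i^{λ_i}) x} has dimension exactly 1. -/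
open scoped TensorProduct
open PiTensorProduct

/-- The action of the diagonal matrix `diag(t)`, `t ∈ (kˣ)ⁿ`, on the `d`-th tensor power
of `kⁿ`: `diag(t)·(v₁ ⊗ ⋯ ⊗ v_d) = (diag(t) v₁) ⊗ ⋯ ⊗ (diag(t) v_d)`. -/
noncomputable def diagAction (k : Type*) [Field k] (n d : ℕ) (t : Fin n → kˣ) :
    (⨂[k]^d (Fin n → k)) →ₗ[k] (⨂[k]^d (Fin n → k)) :=
  PiTensorProduct.map fun _ : Fin d =>
    Matrix.mulVecLin (Matrix.diagonal fun i => (t i : k))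

namespace Stmt5Aux

variable (k : Type*) [Field k] {n d : ℕ}

/-- number of `i` with `f i = j` -/
def cnt (f : Fin d → Fin n) (j : Fin n) : ℕ := (Finset.univ.filter fun i => f i = j).card

lemma cnt_eq_card (f : Fin d → Fin n) (j : Fin n) :
    cnt f j = Fintype.card {i // f i = j} := (Fintype.card_subtype _).symm

lemma cnt_comp (f : Fin d → Fin n) (σ : Equiv.Perm (Fin d)) :
    cnt (f ∘ ⇑σ) = cnt f := by
  funext j
  rw [cnt_eq_card, cnt_eq_card]
  exact Fintype.card_congr
    (Equiv.subtypeEquiv (p := fun i => (f ∘ ⇑σ) i = j) (q := fun i => f i = j) σ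
      fun a => Iff.rfl)

lemma prod_cnt {M : Type*} [CommMonoid M] (f : Fin d → Fin n) (c : Fin n → M) :
    ∏ i, c (f i) = ∏ j, c j ^ cnt f j := by
  rw [← Finset.prod_fiberwise_of_maps_to (fun i _ => Finset.mem_univ (f i)) (fun i => c (f i))]
  refine Finset.prod_congr rfl fun j _ => ?_
  rw [cnt, ← Finset.prod_const]
  exact Finset.prod_congr rfl fun i hi => by rw [(Finset.mem_filter.1 hi).2]

lemma exists_cnt_eq (lam : Fin n → ℕ) (hlam : ∑ i, lam i = d) :
    ∃ f : Fin d → Fin n, cnt f = lam := by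
  have hc : Fintype.card (Σ j : Fin n, Fin (lam j)) = Fintype.card (Fin d) := by
    simp [hlam]
  let E := Fintype.equivOfCardEq hc
  refine ⟨fun i => (E.symm i).1, funext fun j => ?_⟩
  rw [cnt_eq_card]
  haveI : Unique {x : Fin n // x = j} := ⟨⟨⟨j, rfl⟩⟩, by rintro ⟨x, rfl⟩; rfl⟩
  have e1 : {i : Fin d // (E.symm i).1 = j} ≃ {y : Σ j', Fin (lam j') // y.1 = j} :=
    (Equiv.subtypeEquiv E.symm fun i => Iff.rfl)
  have e2 := e1.trans (Equiv.subtypeSigmaEquiv (fun j' : Fin n => Fin (lam j')) (fun x => x = j))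
  rw [Fintype.card_congr e2, Fintype.card_sigma]
  rw [Fintype.sum_eq_single (default : {x : Fin n // x = j}) (fun x hx => absurd (Unique.eq_default x) hx)]
  rw [Fintype.card_fin, (default : {x : Fin n // x = j}).2]

lemma exists_perm_comp {f g : Fin d → Fin n} (h : cnt f = cnt g) :
    ∃ σ : Equiv.Perm (Fin d), f = g ∘ ⇑σ := by
  have F : ∀ j, {i // f i = j} ≃ {i // g i = j} := fun j =>
    Fintype.equivOfCardEq (by rw [← cnt_eq_card, ← cnt_eq_card, h])
  refine ⟨(Equiv.sigmaFiberEquiv f).symm.trans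
    ((Equiv.sigmaCongrRight F).trans (Equiv.sigmaFiberEquiv g)), funext fun i => ?_⟩
  exact (F (f i) ⟨i, rfl⟩).2.symm

variable (n d) in
/-- basis vectors -/
noncomputable def bv (f : Fin d → Fin n) : ⨂[k]^d (Fin n → k) :=
  tprod k fun i => Pi.single (f i) (1 : k)

variable (n d) in
/-- coefficient functionals -/
noncomputable def phi : (⨂[k]^d (Fin n → k)) →ₗ[k] ((Fin d → Fin n) → k) :=
  PiTensorProduct.lift (MultilinearMap.pi fun f =>
    (MultilinearMap.mkPiAlgebra k (Fin d) k).compLinearMap fun i => LinearMap.proj (f i))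

lemma phi_tprod (v : Fin d → (Fin n → k)) (f : Fin d → Fin n) :
    phi k n d (tprod k v) f = ∏ i, v i (f i) := by
  simp [phi]

lemma phi_bv (g f : Fin d → Fin n) :
    phi k n d (bv k n d g) f = if f = g then 1 else 0 := by
  rw [bv, phi_tprod]
  by_cases h : f = g
  · subst h
    simp only [if_pos rfl]
    refine Finset.prod_eq_one fun i _ => Pi.single_eq_same _ _
  · rw [if_neg h]
    obtain ⟨i, hi⟩ := Function.ne_iff.1 h
    exact Finset.prod_eq_zero (Finset.mem_univ i) (Pi.single_eq_of_ne hi _)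

lemma phi_sum_eval (c : (Fin d → Fin n) → k) (g : Fin d → Fin n) :
    phi k n d (∑ h, c h • bv k n d h) g = c g := by
  rw [map_sum]
  simp only [map_smul]
  rw [Finset.sum_apply]
  simp only [Pi.smul_apply, phi_bv, smul_eq_mul, mul_ite, mul_one, mul_zero]
  rw [Finset.sum_ite_eq]
  simp

lemma sum_repr (x : ⨂[k]^d (Fin n → k)) :
    ∑ g, phi k n d x g • bv k n d g = x := by
  have : (∑ g : Fin d → Fin n,
      LinearMap.smulRight ((LinearMap.proj g).comp (phi k n d)) (bv k n d g)) = LinearMap.id := by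
    apply LinearMap.ext_on PiTensorProduct.span_tprod_eq_top
    rintro _ ⟨v, rfl⟩
    have hv : v = fun i => ∑ j : Fin n, v i j • (Pi.single j (1 : k) : Fin n → k) := by
      funext i
      conv_lhs => rw [← Finset.univ_sum_single (v i)]
      refine Finset.sum_congr rfl fun j _ => funext fun j' => by
        simp [Pi.single_apply, mul_ite]
    rw [LinearMap.sum_apply, LinearMap.id_apply]
    conv_rhs => rw [hv, MultilinearMap.map_sum]

    refine Finset.sum_congr rfl fun g _ => ?_
    rw [MultilinearMap.map_smul_univ]
    simp only [LinearMap.smulRight_apply, LinearMap.coe_comp, Function.comp_apply,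
      LinearMap.proj_apply]
    rw [phi_tprod]
    rfl
  have := congrArg (fun L => L x) this
  simpa using this

lemma diag_bv (t : Fin n → kˣ) (f : Fin d → Fin n) :
    diagAction k n d t (bv k n d f) = (∏ j, (t j : k) ^ cnt f j) • bv k n d f := by
  rw [bv, diagAction, PiTensorProduct.map_tprod]
  have h1 : ∀ i, (Matrix.mulVecLin (Matrix.diagonal fun i => (t i : k)) :
      (Fin n → k) →ₗ[k] (Fin n → k))
      (Pi.single (f i) (1 : k)) = (t (f i) : k) • (Pi.single (f i) (1 : k) : Fin n → k) := by
    intro i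
    funext j'
    by_cases hj : j' = f i <;>
      simp [Matrix.mulVecLin_apply, Matrix.mulVec_diagonal, Pi.single_apply, hj]
  simp only [h1]
  rw [MultilinearMap.map_smul_univ]
  exact congrArg (· • (tprod k fun i => (Pi.single (f i) (1 : k) : Fin n → k)))
    (prod_cnt f fun j => (t j : k))

lemma perm_bv (σ : Equiv.Perm (Fin d)) (f : Fin d → Fin n) :
    (permAction k (Fin n → k) σ).toLinearMap (bv k n d f) = bv k n d (f ∘ ⇑σ.symm) := by
  simp [permAction, bv, PiTensorProduct.reindex_tprod]

lemma pow_units_inj [Infinite k] {a b : ℕ} (h : ∀ u : kˣ, (u : k) ^ a = (u : k) ^ b) :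
    a = b := by
  have h' : ∀ x : k, x ^ (a + 1) = x ^ (b + 1) := by
    intro x
    rcases eq_or_ne x 0 with rfl | hx
    · simp
    · have := h (Units.mk0 x hx)
      simp only [Units.val_mk0] at this
      rw [pow_succ, pow_succ, this]
  have := Polynomial.funext (R := k) (p := Polynomial.X ^ (a + 1))
    (q := Polynomial.X ^ (b + 1)) (by simp [h'])
  have := congrArg Polynomial.natDegree this
  simpa using this

lemma monomial_eq [Infinite k] {a b : Fin n → ℕ}
    (h : ∀ t : Fin n → kˣ, ∏ j, (t j : k) ^ a j = ∏ j, (t j : k) ^ b j) : a = b := by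
  funext j
  apply pow_units_inj k
  intro u
  have := h (Function.update (fun _ => 1) j u)
  rwa [Finset.prod_eq_single j (fun j' _ hj' => by simp [Function.update_of_ne hj'])
      (by simp), Finset.prod_eq_single j (fun j' _ hj' => by simp [Function.update_of_ne hj'])
      (by simp), Function.update_self] at this

end Stmt5Aux

open Stmt5Aux in
theorem stmt_5 (k : Type*) [Field k] [Infinite k] (n d : ℕ) (hn : 1 ≤ n) (hd : 1 ≤ d)
    (lam : Fin n → ℕ) (hlam : ∑ i, lam i = d) :
    Module.finrank k
      (dividedPower k (Fin n → k) d ⊓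
        ⨅ t : Fin n → kˣ,
          LinearMap.eqLocus (diagAction k n d t)
            ((∏ i, (t i : k) ^ lam i) • LinearMap.id) : Submodule k _) = 1 := by
  classical
  obtain ⟨f₀, hf₀⟩ := exists_cnt_eq lam hlam
  set S : Finset (Fin d → Fin n) := Finset.univ.filter fun f => cnt f = lam with hS
  set v : ⨂[k]^d (Fin n → k) := ∑ f ∈ S, bv k n d f with hvdef
  have hv' : v = ∑ h, (if cnt h = lam then (1 : k) else 0) • bv k n d h := by
    rw [hvdef, hS, Finset.sum_filter]
    exact Finset.sum_congr rfl fun h _ => by split <;> simp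
  have hphiv : ∀ g, phi k n d v g = if cnt g = lam then 1 else 0 := by
    intro g
    rw [hv']
    exact phi_sum_eval k (fun h => if cnt h = lam then (1 : k) else 0) g
  have hvne : v ≠ 0 := by
    intro h0
    have h1 := hphiv f₀
    rw [h0, map_zero, hf₀] at h1
    simp at h1
  have hmem : ∀ x : ⨂[k]^d (Fin n → k),
      x ∈ (dividedPower k (Fin n → k) d ⊓
        ⨅ t : Fin n → kˣ, LinearMap.eqLocus (diagAction k n d t)
          ((∏ i, (t i : k) ^ lam i) • LinearMap.id)) ↔
      (∀ σ : Equiv.Perm (Fin d), (permAction k (Fin n → k) σ).toLinearMap x = x) ∧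
      (∀ t : Fin n → kˣ, diagAction k n d t x = (∏ i, (t i : k) ^ lam i) • x) := by
    intro x
    simp [dividedPower, Submodule.mem_inf, Submodule.mem_iInf, LinearMap.mem_eqLocus]
  have hdiagx : ∀ (x : ⨂[k]^d (Fin n → k)) (t : Fin n → kˣ) (g : Fin d → Fin n),
      phi k n d (diagAction k n d t x) g
        = (∏ j, (t j : k) ^ cnt g j) * phi k n d x g := by
    intro x t g
    have e1 : diagAction k n d t x
        = ∑ h, ((∏ j, (t j : k) ^ cnt h j) * phi k n d x h) • bv k n d h := by
      conv_lhs => rw [← sum_repr k x, map_sum]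
      refine Finset.sum_congr rfl fun h _ => ?_
      rw [map_smul, diag_bv, smul_smul, mul_comm]
    rw [e1]
    exact phi_sum_eval k (fun h => (∏ j, (t j : k) ^ cnt h j) * phi k n d x h) g
  have hpermx : ∀ (x : ⨂[k]^d (Fin n → k)) (σ : Equiv.Perm (Fin d)) (g : Fin d → Fin n),
      phi k n d ((permAction k (Fin n → k) σ).toLinearMap x) g = phi k n d x (g ∘ ⇑σ) := by
    intro x σ g
    have e1 : (permAction k (Fin n → k) σ).toLinearMap x
        = ∑ h, phi k n d x (h ∘ ⇑σ) • bv k n d h := by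
      conv_lhs => rw [← sum_repr k x, map_sum]
      simp only [map_smul, perm_bv]
      refine Fintype.sum_equiv (Equiv.arrowCongr σ (Equiv.refl (Fin n))) _ _ fun h => ?_
      have he : (Equiv.arrowCongr σ (Equiv.refl (Fin n))) h = h ∘ ⇑σ.symm := by
        funext i; simp
      rw [he]
      have h2 : (h ∘ ⇑σ.symm) ∘ ⇑σ = h := by funext i; simp
      rw [h2]
    rw [e1]
    exact phi_sum_eval k (fun h => phi k n d x (h ∘ ⇑σ)) g
  have hW : (dividedPower k (Fin n → k) d ⊓
      ⨅ t : Fin n → kˣ, LinearMap.eqLocus (diagAction k n d t)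
        ((∏ i, (t i : k) ^ lam i) • LinearMap.id)) = Submodule.span k {v} := by
    apply le_antisymm
    · intro x hx
      rw [hmem] at hx
      obtain ⟨hperm, hdiag⟩ := hx
      have hc0 : ∀ g, cnt g ≠ lam → phi k n d x g = 0 := by
        intro g hg
        by_contra hne
        refine hg (monomial_eq k fun t => ?_)
        have h1 : phi k n d (diagAction k n d t x) g
            = phi k n d ((∏ i, (t i : k) ^ lam i) • x) g := by rw [hdiag t]
        rw [hdiagx x t g, map_smul] at h1
        have h2 : (∏ j, (t j : k) ^ cnt g j) * phi k n d x g
            = (∏ j, (t j : k) ^ lam j) * phi k n d x g := by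
          rw [h1]; simp [mul_comm]
        exact mul_right_cancel₀ hne h2
      have hcc : ∀ g, cnt g = lam → phi k n d x g = phi k n d x f₀ := by
        intro g hg
        obtain ⟨σ, hσ⟩ := exists_perm_comp (hf₀.trans hg.symm)
        have h1 := hpermx x σ g
        rw [hperm σ] at h1
        rw [← hσ] at h1
        exact h1
      have hcoef : ∀ g, phi k n d x g = (if cnt g = lam then phi k n d x f₀ else 0) := by
        intro g
        rcases eq_or_ne (cnt g) lam with h | h
        · rw [if_pos h]; exact hcc g h
        · rw [if_neg h]; exact hc0 g h
      have hx2 : x = phi k n d x f₀ • v := by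
        conv_lhs => rw [← sum_repr k x]
        rw [hv', Finset.smul_sum]
        refine Finset.sum_congr rfl fun g _ => ?_
        rw [hcoef g, smul_smul]
        congr 1
        split <;> simp
      rw [hx2]
      exact Submodule.smul_mem _ _ (Submodule.mem_span_singleton_self v)
    · rw [Submodule.span_le, Set.singleton_subset_iff, SetLike.mem_coe, hmem]
      constructor
      · intro σ
        rw [hvdef, map_sum]
        simp only [perm_bv]
        refine Finset.sum_nbij' (fun f => f ∘ ⇑σ.symm) (fun f => f ∘ ⇑σ) ?_ ?_ ?_ ?_ ?_
        · intro a ha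
          rw [hS, Finset.mem_filter] at ha ⊢
          exact ⟨Finset.mem_univ _, by rw [cnt_comp, ha.2]⟩
        · intro a ha
          rw [hS, Finset.mem_filter] at ha ⊢
          exact ⟨Finset.mem_univ _, by rw [cnt_comp, ha.2]⟩
        · intro a _; funext i; simp
        · intro a _; funext i; simp
        · intro a _; rfl
      · intro t
        rw [hvdef, map_sum, Finset.smul_sum]
        refine Finset.sum_congr rfl fun f hf => ?_
        rw [diag_bv]
        have hcf : cnt f = lam := (Finset.mem_filter.1 hf).2
        rw [hcf]
  rw [hW]
  exact finrank_span_singleton hvne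
end

section
/- Let k be a field of characteristic p > 0 and V a finite-dimensional k-vector space. Let q : V^{⊗p} → Sᵖ(V) be the quotient map onto the p-th symmetric power, and let N : V^{⊗p} → V^{⊗p} be the symmetrization operator N(x) = Σ_{σ ∈ S_p} σ·x. Then N(x − σ·x) = 0 for all x and σ, the image of N lies in Γᵖ(V) = (V^{⊗p})^{S_p}, and hence N induces a k-linear map α_V : Sᵖ(V) → Γᵖ(V). Moreover: (i) the kernel of α_V equals the k-linear span of the elements q(v^{⊗p}) for v ∈ V; (ii) dim ker(α_V) = dim V; and (iii) dim(Γᵖ(V)/im(α_V)) = dim V. -/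
open scoped TensorProduct
open PiTensorProduct

/-- The subspace of `V^{⊗p}` spanned by the elements `x - σ·x`; the `p`-th symmetric
power `Sᵖ(V)` is the quotient of `V^{⊗p}` by this subspace, and `q` below is the
quotient map. -/
noncomputable def symRelations (k : Type*) [CommRing k] (V : Type*) [AddCommGroup V]
    [Module k V] (n : ℕ) : Submodule k (⨂[k]^n V) :=
  Submodule.span k
    {z | ∃ (x : ⨂[k]^n V) (σ : Equiv.Perm (Fin n)), z = x - permAction k V σ x}

/-- The symmetrization operator `N(x) = Σ_{σ ∈ S_p} σ·x` on `V^{⊗p}`. -/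
noncomputable def symmetrization (k : Type*) [CommRing k] (V : Type*) [AddCommGroup V]
    [Module k V] (p : ℕ) : (⨂[k]^p V) →ₗ[k] (⨂[k]^p V) :=
  ∑ σ : Equiv.Perm (Fin p), (permAction k V σ).toLinearMap

namespace Stmt6

variable {k : Type*} [Field k] {V : Type*} [AddCommGroup V] [Module k V]
set_option linter.unusedSectionVars false

variable {p : ℕ} {ι : Type*} [Fintype ι] [DecidableEq ι]

/-- basis tensor -/
noncomputable def Bt (b : Module.Basis ι k V) (f : Fin p → ι) : ⨂[k]^p V :=
  tprod k fun i => b (f i)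

noncomputable def toCoord (b : Module.Basis ι k V) : (⨂[k]^p V) →ₗ[k] ((Fin p → ι) → k) :=
  lift (MultilinearMap.pi fun f =>
    (MultilinearMap.mkPiAlgebra k (Fin p) k).compLinearMap fun i => b.coord (f i))

lemma toCoord_tprod (b : Module.Basis ι k V) (v : Fin p → V) (f : Fin p → ι) :
    toCoord b (tprod k v) f = ∏ i, b.repr (v i) (f i) := by
  simp [toCoord, Module.Basis.coord]

noncomputable def ofCoord (b : Module.Basis ι k V) : ((Fin p → ι) → k) →ₗ[k] (⨂[k]^p V) :=
  (Pi.basisFun k (Fin p → ι)).constr k fun f => Bt b f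

lemma ofCoord_apply (b : Module.Basis ι k V) (y : (Fin p → ι) → k) :
    ofCoord b y = ∑ f, y f • Bt b f := by
  rw [ofCoord, Module.Basis.constr_apply_fintype]
  simp

lemma toCoord_Bt (b : Module.Basis ι k V) (f g : Fin p → ι) :
    toCoord b (Bt b f) g = if g = f then 1 else 0 := by
  rw [Bt, toCoord_tprod]
  by_cases h : g = f
  · subst h; simp
  · rw [if_neg h]
    obtain ⟨i, hi⟩ := Function.ne_iff.mp h
    refine Finset.prod_eq_zero (Finset.mem_univ i) ?_
    simp [Module.Basis.repr_self, Finsupp.single_apply, Ne.symm hi]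

lemma ofCoord_single (b : Module.Basis ι k V) (f : Fin p → ι) :
    ofCoord b (Pi.single f 1) = Bt b f := by
  rw [ofCoord_apply]
  rw [Finset.sum_eq_single f]
  · simp
  · intro g _ hg; simp [Pi.single_apply, hg]
  · simp

lemma ofCoord_toCoord (b : Module.Basis ι k V) (x : ⨂[k]^p V) :
    ofCoord b (toCoord b x) = x := by
  have : (ofCoord b).comp (toCoord b) = (LinearMap.id : (⨂[k]^p V) →ₗ[k] ⨂[k]^p V) := by
    apply PiTensorProduct.ext
    apply MultilinearMap.ext
    intro v
    simp only [LinearMap.compMultilinearMap_apply, LinearMap.comp_apply, LinearMap.id_apply]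
    conv_rhs => rw [show v = fun i => ∑ j, b.repr (v i) j • b j by
      funext i; exact (Module.Basis.sum_repr b (v i)).symm]
    rw [MultilinearMap.map_sum]
    rw [ofCoord_apply]
    refine Finset.sum_congr rfl fun f _ => ?_
    rw [MultilinearMap.map_smul_univ, toCoord_tprod, Bt]
  exact DFunLike.congr_fun this x

lemma toCoord_ofCoord (b : Module.Basis ι k V) (y : (Fin p → ι) → k) :
    toCoord b (ofCoord b y) = y := by
  have : (toCoord b).comp (ofCoord b) = (LinearMap.id : ((Fin p → ι) → k) →ₗ[k] (Fin p → ι) → k) := by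
    apply Module.Basis.ext (Pi.basisFun k (Fin p → ι))
    intro f
    rw [Pi.basisFun_apply]
    simp only [LinearMap.comp_apply, LinearMap.id_apply, ofCoord_single]
    funext g
    rw [toCoord_Bt, Pi.single_apply]
  exact DFunLike.congr_fun this y

/-- the coordinate equivalence -/
noncomputable def E (b : Module.Basis ι k V) : (⨂[k]^p V) ≃ₗ[k] ((Fin p → ι) → k) :=
  LinearEquiv.ofLinear (toCoord b) (ofCoord b)
    (by ext y; simp [toCoord_ofCoord]) (by ext x; simp [ofCoord_toCoord])

noncomputable def B (b : Module.Basis ι k V) : Module.Basis (Fin p → ι) k (⨂[k]^p V) :=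
  Module.Basis.ofRepr ((E b).trans (Finsupp.linearEquivFunOnFinite k k _).symm)

lemma B_apply (b : Module.Basis ι k V) (f : Fin p → ι) : B b f = Bt b f := by
  rw [Module.Basis.apply_eq_iff]
  apply (Finsupp.linearEquivFunOnFinite k k _).injective
  simp only [B, Module.Basis.ofRepr, LinearEquiv.trans_apply]
  rw [LinearEquiv.apply_symm_apply]
  show toCoord b (Bt b f) = _
  funext g
  rw [toCoord_Bt]
  simp [Finsupp.linearEquivFunOnFinite_apply, Finsupp.single_apply, eq_comm]



namespace P2
variable (k V)

lemma permAction_Bt (b : Module.Basis ι k V) (σ : Equiv.Perm (Fin p)) (f : Fin p → ι) :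
    permAction k V σ (Bt b f) = Bt b (f ∘ σ.symm) := by
  simp only [permAction, Bt, PiTensorProduct.reindex_tprod]
  rfl

lemma permAction_permAction (σ τ : Equiv.Perm (Fin p)) (x : ⨂[k]^p V) :
    permAction k V τ (permAction k V σ x) = permAction k V (σ.trans τ) x := by
  simp only [permAction]
  exact PiTensorProduct.reindex_reindex σ τ x

lemma symmetrization_apply (x : ⨂[k]^p V) :
    symmetrization k V p x = ∑ σ : Equiv.Perm (Fin p), permAction k V σ x := by
  simp [symmetrization, LinearMap.sum_apply]

lemma N_permAction (σ : Equiv.Perm (Fin p)) (x : ⨂[k]^p V) :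
    symmetrization k V p (permAction k V σ x) = symmetrization k V p x := by
  rw [symmetrization_apply, symmetrization_apply]
  refine Fintype.sum_equiv (Equiv.mulRight σ) _ _ fun τ => ?_
  rw [permAction_permAction]
  rfl

lemma permAction_N (σ : Equiv.Perm (Fin p)) (x : ⨂[k]^p V) :
    permAction k V σ (symmetrization k V p x) = symmetrization k V p x := by
  rw [symmetrization_apply, map_sum]
  refine Fintype.sum_equiv (Equiv.mulLeft σ) _ _ fun τ => ?_
  rw [permAction_permAction]
  rfl

lemma item1 (x : ⨂[k]^p V) (σ : Equiv.Perm (Fin p)) :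
    symmetrization k V p (x - permAction k V σ x) = 0 := by
  rw [map_sub, N_permAction, sub_self]

lemma item2 (x : ⨂[k]^p V) : symmetrization k V p x ∈ dividedPower k V p := by
  rw [dividedPower, Submodule.mem_iInf]
  intro σ
  rw [LinearMap.mem_eqLocus]
  simpa using permAction_N k V σ x

lemma relations_le_kerN : symRelations k V p ≤ LinearMap.ker (symmetrization k V p) := by
  rw [symRelations, Submodule.span_le]
  rintro z ⟨x, σ, rfl⟩
  simp [LinearMap.mem_ker, item1]

end P2

/-- the orbit setoid -/
def pr (p : ℕ) (ι : Type*) : Setoid (Fin p → ι) where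
  r f g := ∃ σ : Equiv.Perm (Fin p), g = f ∘ σ
  iseqv := by
    refine ⟨fun f => ⟨1, rfl⟩, ?_, ?_⟩
    · rintro f g ⟨σ, rfl⟩
      exact ⟨σ⁻¹, by funext i; simp⟩
    · rintro f g h ⟨σ, rfl⟩ ⟨τ, rfl⟩
      exact ⟨σ * τ, by funext i; rfl⟩

noncomputable instance (p : ℕ) (ι : Type*) [Finite ι] : Fintype (Quotient (pr p ι)) :=
  Fintype.ofFinite _

noncomputable instance (p : ℕ) (ι : Type*) : DecidableEq (Quotient (pr p ι)) :=
  Classical.decEq _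

/-- summing coordinates over orbits -/
noncomputable def sumTo (k : Type*) [Field k] (p : ℕ) (ι : Type*) [Fintype ι] [DecidableEq ι] :
    ((Fin p → ι) → k) →ₗ[k] (Quotient (pr p ι) → k) where
  toFun y q := ∑ f ∈ Finset.univ.filter (fun f => Quotient.mk (pr p ι) f = q), y f
  map_add' y z := by funext q; simp [Finset.sum_add_distrib]
  map_smul' c y := by funext q; simp [Finset.mul_sum]

noncomputable def theta (b : Module.Basis ι k V) :
    (⨂[k]^p V) →ₗ[k] (Quotient (pr p ι) → k) :=
  (sumTo k p ι).comp (toCoord b)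

lemma theta_Bt (b : Module.Basis ι k V) (f : Fin p → ι) :
    theta b (Bt b f) = Pi.single (Quotient.mk (pr p ι) f) 1 := by
  funext q
  show ∑ g ∈ Finset.univ.filter (fun g => Quotient.mk (pr p ι) g = q),
      toCoord b (Bt b f) g = _
  simp only [toCoord_Bt]
  rw [Finset.sum_ite_eq' _ f (fun _ => (1:k))]
  simp [Pi.single_apply, eq_comm]

/-- section of theta -/
noncomputable def sec (b : Module.Basis ι k V) :
    (Quotient (pr p ι) → k) →ₗ[k] (⨂[k]^p V) :=
  (Pi.basisFun k (Quotient (pr p ι))).constr k fun q => Bt b q.out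

lemma sec_apply (b : Module.Basis ι k V) (y : Quotient (pr p ι) → k) :
    sec b y = ∑ q, y q • Bt b q.out := by
  rw [sec, Module.Basis.constr_apply_fintype]
  simp

lemma theta_sec (b : Module.Basis ι k V) (y : Quotient (pr p ι) → k) :
    theta b (sec b y) = y := by
  rw [sec_apply, map_sum]
  simp only [map_smul, theta_Bt]
  funext q
  simp only [Finset.sum_apply, Pi.smul_apply]
  rw [Finset.sum_eq_single q]
  · rw [Quotient.out_eq]; simp
  · intro q' _ hq'
    rw [Quotient.out_eq, Pi.single_apply, if_neg (Ne.symm hq'), smul_zero]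
  · simp


lemma sec_single (b : Module.Basis ι k V) (q : Quotient (pr p ι)) :
    sec b (Pi.single q 1) = Bt b q.out := by
  rw [sec_apply, Finset.sum_eq_single q]
  · simp
  · intro q' _ hq'; simp [Pi.single_apply, hq']
  · simp

lemma theta_perm (b : Module.Basis ι k V) (σ : Equiv.Perm (Fin p)) (x : ⨂[k]^p V) :
    theta b (permAction k V σ x) = theta b x := by
  have h : (theta b).comp (permAction k V σ).toLinearMap = theta b := by
    apply Module.Basis.ext (B b)
    intro f
    simp only [LinearMap.comp_apply, LinearEquiv.coe_toLinearMap, B_apply]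
    have hq : Quotient.mk (pr p ι) f = Quotient.mk (pr p ι) (f ∘ ⇑σ.symm) :=
      Quotient.sound ⟨σ.symm, rfl⟩
    rw [P2.permAction_Bt, theta_Bt, theta_Bt, hq]
  exact DFunLike.congr_fun h x

lemma relations_le_ker_theta (b : Module.Basis ι k V) :
    symRelations k V p ≤ LinearMap.ker (theta b) := by
  rw [symRelations, Submodule.span_le]
  rintro z ⟨x, σ, rfl⟩
  simp [LinearMap.mem_ker, theta_perm]

lemma Bt_sub_out_mem (b : Module.Basis ι k V) (f : Fin p → ι) :
    Bt b f - Bt b (Quotient.mk (pr p ι) f).out ∈ symRelations k V p := by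
  obtain ⟨σ, hσ⟩ : (pr p ι).r (Quotient.mk (pr p ι) f).out f :=
    Quotient.exact (Quotient.out_eq _)
  have hout : (Quotient.mk (pr p ι) f).out = f ∘ ⇑σ.symm := by
    funext i
    conv_rhs => rw [Function.comp_apply, hσ]
    simp
  refine Submodule.subset_span ⟨Bt b f, σ, ?_⟩
  rw [P2.permAction_Bt, hout]

lemma stepA (b : Module.Basis ι k V) (x : ⨂[k]^p V) :
    x - sec b (theta b x) ∈ symRelations k V p := by
  have h : (symRelations k V p).mkQ.comp
      (LinearMap.id - (sec b).comp (theta b)) = 0 := by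
    apply Module.Basis.ext (B b)
    intro f
    simp only [LinearMap.comp_apply, LinearMap.sub_apply, LinearMap.id_apply, B_apply,
      LinearMap.zero_apply, map_sub, theta_Bt, sec_single]
    rw [← map_sub, Submodule.mkQ_apply, Submodule.Quotient.mk_eq_zero]
    exact Bt_sub_out_mem b f
  have h2 := DFunLike.congr_fun h x
  simp only [LinearMap.comp_apply, LinearMap.sub_apply, LinearMap.id_apply,
    LinearMap.zero_apply, Submodule.mkQ_apply] at h2
  rwa [Submodule.Quotient.mk_eq_zero] at h2

lemma ker_theta_eq (b : Module.Basis ι k V) :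
    LinearMap.ker (theta b) = symRelations k V p := by
  refine le_antisymm ?_ (relations_le_ker_theta b)
  intro x hx
  rw [LinearMap.mem_ker] at hx
  have := stepA b x
  rwa [hx, map_zero, sub_zero] at this

variable (k V p) in
/-- the induced map `α` -/
noncomputable def alpha : ((⨂[k]^p V) ⧸ symRelations k V p) →ₗ[k] dividedPower k V p :=
  Submodule.liftQ (symRelations k V p)
    ((symmetrization k V p).codRestrict (dividedPower k V p) (P2.item2 k V))
    (by rw [LinearMap.ker_codRestrict]; exact P2.relations_le_kerN k V)

lemma alpha_mk (x : ⨂[k]^p V) :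
    (alpha k V p (Submodule.Quotient.mk x) : ⨂[k]^p V) = symmetrization k V p x := by
  rfl

lemma ker_alpha_eq_map :
    LinearMap.ker (alpha k V p) =
      (LinearMap.ker (symmetrization k V p)).map (symRelations k V p).mkQ := by
  rw [alpha, Submodule.ker_liftQ, LinearMap.ker_codRestrict]

noncomputable def thetaBar (b : Module.Basis ι k V) :
    ((⨂[k]^p V) ⧸ symRelations k V p) →ₗ[k] (Quotient (pr p ι) → k) :=
  Submodule.liftQ (symRelations k V p) (theta b) (relations_le_ker_theta b)

lemma thetaBar_bij (b : Module.Basis ι k V) : Function.Bijective (thetaBar (p := p) b) := by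
  constructor
  · rw [← LinearMap.ker_eq_bot, thetaBar, Submodule.ker_liftQ, ker_theta_eq,
      Submodule.mkQ_map_self]
  · intro y
    exact ⟨Submodule.Quotient.mk (sec b y), by
      rw [thetaBar, Submodule.liftQ_apply, theta_sec]⟩

/-- the stabilizer of `g` in `S_p` -/
def stab (p : ℕ) {ι : Type*} (g : Fin p → ι) : Subgroup (Equiv.Perm (Fin p)) where
  carrier := {σ | g ∘ ⇑σ = g}
  one_mem' := by simp
  mul_mem' := by
    intro a b ha hb
    show g ∘ ⇑(a * b) = g
    have : ⇑(a * b) = ⇑a ∘ ⇑b := rfl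
    rw [this, ← Function.comp_assoc, ha, hb]
  inv_mem' := by
    intro a ha
    funext i
    have := congrFun ha (a⁻¹ i)
    simpa using this.symm

lemma not_dvd_card_stab (hp' : p.Prime) (g : Fin p → ι)
    (hg : ¬ ∃ i, g = fun _ => i) :
    ¬ (p ∣ (Finset.univ.filter fun σ : Equiv.Perm (Fin p) => g ∘ ⇑σ = g).card) := by
  intro hdvd
  haveI : Fact p.Prime := ⟨hp'⟩
  haveI : DecidablePred (· ∈ stab p g) := fun σ => decidable_of_iff (g ∘ ⇑σ = g) Iff.rfl
  have hcard : Fintype.card (stab p g) =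
      (Finset.univ.filter fun σ : Equiv.Perm (Fin p) => g ∘ ⇑σ = g).card := by
    rw [Fintype.card_subtype]
    exact congrArg Finset.card (Finset.filter_congr fun x _ => Iff.rfl)
  rw [← hcard] at hdvd
  obtain ⟨σ, hσ⟩ := exists_prime_orderOf_dvd_card p hdvd
  have hord : orderOf (σ : Equiv.Perm (Fin p)) = p := by
    rw [Subgroup.orderOf_coe, hσ]
  have hcyc : Equiv.Perm.IsCycle (σ : Equiv.Perm (Fin p)) := by
    apply Equiv.Perm.isCycle_of_prime_order'
    · rw [hord]; exact hp'
    · rw [hord, Fintype.card_fin]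
      have := hp'.pos
      omega
  have hsupp : (σ : Equiv.Perm (Fin p)).support = Finset.univ := by
    apply Finset.eq_univ_of_card
    rw [← hcyc.orderOf, hord, Fintype.card_fin]
  obtain ⟨a, _, hsame⟩ := hcyc
  have hfix : ∀ z : ℤ, g (((σ : Equiv.Perm (Fin p)) ^ z) a) = g a := by
    intro z
    have hmem : (σ : Equiv.Perm (Fin p)) ^ z ∈ stab p g :=
      Subgroup.zpow_mem _ σ.2 z
    have heq : g ∘ ⇑((σ : Equiv.Perm (Fin p)) ^ z) = g := hmem
    exact congrFun heq a
  apply hg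
  refine ⟨g a, funext fun y => ?_⟩
  have hy : ((σ : Equiv.Perm (Fin p)) y) ≠ y := by
    rw [← Equiv.Perm.mem_support, hsupp]
    exact Finset.mem_univ y
  obtain ⟨z, hz⟩ := hsame hy
  rw [← hz, hfix]

lemma coord_N_Bt (b : Module.Basis ι k V) (g h : Fin p → ι) :
    toCoord b (symmetrization k V p (Bt b g)) h =
      ((Finset.univ.filter fun σ : Equiv.Perm (Fin p) => h = g ∘ ⇑σ.symm).card : k) := by
  rw [P2.symmetrization_apply, map_sum]
  simp only [Finset.sum_apply, P2.permAction_Bt, toCoord_Bt]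
  rw [Finset.sum_boole]

lemma card_filter_symm_eq (g : Fin p → ι) :
    (Finset.univ.filter fun σ : Equiv.Perm (Fin p) => g = g ∘ ⇑σ.symm).card =
      (Finset.univ.filter fun σ : Equiv.Perm (Fin p) => g ∘ ⇑σ = g).card := by
  apply Finset.card_bij' (fun σ _ => σ⁻¹) (fun σ _ => σ⁻¹)
  · intro σ _; simp
  · intro σ _; simp
  · intro σ hσ
    rw [Finset.mem_filter]
    exact ⟨Finset.mem_univ _, (Finset.mem_filter.mp hσ).2.symm⟩
  · intro σ hσ
    rw [Finset.mem_filter]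
    exact ⟨Finset.mem_univ _, (Finset.mem_filter.mp hσ).2.symm⟩

lemma coord_N_Bt_out_ne (b : Module.Basis ι k V) (q q' : Quotient (pr p ι)) (hne : q' ≠ q) :
    toCoord b (symmetrization k V p (Bt b q'.out)) q.out = 0 := by
  rw [coord_N_Bt]
  have hcard : (Finset.univ.filter
      fun σ : Equiv.Perm (Fin p) => q.out = q'.out ∘ ⇑σ.symm).card = 0 := by
    rw [Finset.card_eq_zero, Finset.filter_eq_empty_iff]
    intro σ _ hcon
    apply hne
    have h2 : Quotient.mk (pr p ι) q'.out = Quotient.mk (pr p ι) q.out :=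
      Quotient.sound ⟨σ.symm, hcon⟩
    rw [Quotient.out_eq, Quotient.out_eq] at h2
    exact h2
  rw [hcard, Nat.cast_zero]

variable [CharP k p] in
lemma stepC (b : Module.Basis ι k V) (hp' : p.Prime) (y : Quotient (pr p ι) → k)
    (hy : symmetrization k V p (sec b y) = 0) :
    sec b y ∈ Submodule.span k (Set.range fun i : ι => Bt b (fun _ : Fin p => i)) := by
  have key : ∀ q : Quotient (pr p ι), (¬ ∃ i, q.out = fun _ => i) → y q = 0 := by
    intro q hq
    have h0 : toCoord b (symmetrization k V p (sec b y)) q.out =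
        y q * ((Finset.univ.filter
          fun σ : Equiv.Perm (Fin p) => q.out ∘ ⇑σ = q.out).card : k) := by
      rw [sec_apply, map_sum, map_sum]
      simp only [map_smul, Finset.sum_apply, Pi.smul_apply, smul_eq_mul]
      rw [Finset.sum_eq_single q]
      · rw [coord_N_Bt, card_filter_symm_eq]
      · intro q' _ hq'
        rw [coord_N_Bt_out_ne b q q' hq', mul_zero]
      · simp
    rw [hy, map_zero] at h0
    have hcast : ((Finset.univ.filter
        fun σ : Equiv.Perm (Fin p) => q.out ∘ ⇑σ = q.out).card : k) ≠ 0 := by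
      intro hc
      exact not_dvd_card_stab hp' q.out hq ((CharP.cast_eq_zero_iff k p _).mp hc)
    have := h0.symm
    rcases mul_eq_zero.mp this with h | h
    · exact h
    · exact absurd h hcast
  rw [sec_apply]
  apply Submodule.sum_mem
  intro q _
  by_cases hc : ∃ i, q.out = fun _ => i
  · obtain ⟨i, hi⟩ := hc
    rw [hi]
    exact Submodule.smul_mem _ _ (Submodule.subset_span ⟨i, rfl⟩)
  · rw [key q hc, zero_smul]
    exact Submodule.zero_mem _

variable [CharP k p] in
lemma N_tprod_const (hp : 0 < p) (v : V) :
    symmetrization k V p (tprod k fun _ : Fin p => v) = 0 := by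
  rw [P2.symmetrization_apply]
  have hall : ∀ σ : Equiv.Perm (Fin p),
      permAction k V σ (tprod k fun _ : Fin p => v) = tprod k fun _ : Fin p => v := by
    intro σ
    simp only [permAction, PiTensorProduct.reindex_tprod]
  rw [Finset.sum_congr rfl fun σ _ => hall σ, Finset.sum_const, Finset.card_univ,
    Fintype.card_perm, Fintype.card_fin, ← Nat.cast_smul_eq_nsmul k,
    (CharP.cast_eq_zero_iff k p _).mpr (Nat.dvd_factorial hp le_rfl), zero_smul]

variable [CharP k p] in
lemma kerN_eq (b : Module.Basis ι k V) (hp' : p.Prime) :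
    LinearMap.ker (symmetrization k V p) =
      symRelations k V p ⊔
        Submodule.span k (Set.range fun i : ι => Bt b (fun _ : Fin p => i)) := by
  refine le_antisymm ?_ (sup_le (P2.relations_le_kerN k V) ?_)
  · intro x hx
    rw [LinearMap.mem_ker] at hx
    have h1 := stepA b x
    have h2 : symmetrization k V p (sec b (theta b x)) = 0 := by
      have h3 := P2.relations_le_kerN k V h1
      rw [LinearMap.mem_ker, map_sub, hx, zero_sub, neg_eq_zero] at h3
      exact h3
    have h4 := stepC b hp' (theta b x) h2
    have h5 : x = (x - sec b (theta b x)) + sec b (theta b x) := by abel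
    rw [h5]
    exact Submodule.add_mem _ (Submodule.mem_sup_left h1) (Submodule.mem_sup_right h4)
  · rw [Submodule.span_le]
    rintro z ⟨i, rfl⟩
    rw [SetLike.mem_coe, LinearMap.mem_ker]
    exact N_tprod_const hp'.pos (b i)

/-- sum over an orbit -/
noncomputable def orbitSum (b : Module.Basis ι k V) (q : Quotient (pr p ι)) : ⨂[k]^p V :=
  ∑ f ∈ Finset.univ.filter (fun f => Quotient.mk (pr p ι) f = q), Bt b f

noncomputable def Phi (b : Module.Basis ι k V) :
    (Quotient (pr p ι) → k) →ₗ[k] (⨂[k]^p V) :=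
  (Pi.basisFun k (Quotient (pr p ι))).constr k (orbitSum b)

lemma Phi_apply (b : Module.Basis ι k V) (y : Quotient (pr p ι) → k) :
    Phi b y = ∑ q, y q • orbitSum b q := by
  rw [Phi, Module.Basis.constr_apply_fintype]
  simp

lemma comp_eq_iff (f g : Fin p → ι) (σ : Equiv.Perm (Fin p)) :
    f ∘ ⇑σ = g ↔ f = g ∘ ⇑σ.symm := by
  constructor
  · rintro rfl; funext i; simp
  · rintro rfl; funext i; simp

lemma orbitSum_mem (b : Module.Basis ι k V) (q : Quotient (pr p ι)) :
    orbitSum b q ∈ dividedPower k V p := by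
  rw [dividedPower, Submodule.mem_iInf]
  intro σ
  rw [LinearMap.mem_eqLocus]
  show permAction k V σ (orbitSum b q) = orbitSum b q
  rw [orbitSum, map_sum]
  simp only [P2.permAction_Bt]
  apply Finset.sum_bij' (fun f _ => f ∘ ⇑σ.symm) (fun f _ => f ∘ ⇑σ)
  · intro f hf
    rw [Finset.mem_filter]
    refine ⟨Finset.mem_univ _, ?_⟩
    rw [← (Finset.mem_filter.mp hf).2]
    exact (Quotient.sound (s := pr p ι) (a := f) ⟨σ.symm, rfl⟩).symm
  · intro f hf
    rw [Finset.mem_filter]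
    refine ⟨Finset.mem_univ _, ?_⟩
    rw [← (Finset.mem_filter.mp hf).2]
    exact (Quotient.sound (s := pr p ι) (a := f) ⟨σ, rfl⟩).symm
  · intro f _; funext i; simp
  · intro f _; funext i; simp
  · intro f _; rfl

lemma coord_perm (b : Module.Basis ι k V) (σ : Equiv.Perm (Fin p)) (x : ⨂[k]^p V)
    (f : Fin p → ι) :
    toCoord b (permAction k V σ x) f = toCoord b x (f ∘ ⇑σ) := by
  have h : (LinearMap.funLeft k k (fun f : Fin p → ι => f ∘ ⇑σ)).comp (toCoord b) =
      (toCoord b).comp (permAction k V σ).toLinearMap := by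
    apply Module.Basis.ext (B b)
    intro g
    simp only [LinearMap.comp_apply, LinearEquiv.coe_toLinearMap, B_apply, P2.permAction_Bt]
    funext f
    rw [LinearMap.funLeft_apply, toCoord_Bt, toCoord_Bt]
    by_cases hfg : f ∘ ⇑σ = g
    · rw [if_pos hfg, if_pos ((comp_eq_iff f g σ).mp hfg)]
    · rw [if_neg hfg, if_neg fun hc => hfg ((comp_eq_iff f g σ).mpr hc)]
  exact (congrFun (DFunLike.congr_fun h x) f).symm

lemma coord_const_on_orbit (b : Module.Basis ι k V) (x : ⨂[k]^p V)
    (hx : x ∈ dividedPower k V p) (f : Fin p → ι) (σ : Equiv.Perm (Fin p)) :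
    toCoord b x (f ∘ ⇑σ) = toCoord b x f := by
  rw [dividedPower, Submodule.mem_iInf] at hx
  have h := hx σ
  rw [LinearMap.mem_eqLocus] at h
  have h2 : permAction k V σ x = x := h
  rw [← coord_perm b σ x f, h2]

lemma gamma_eq_range_Phi (b : Module.Basis ι k V) :
    dividedPower k V p = LinearMap.range (Phi b) := by
  apply le_antisymm
  · intro x hx
    refine ⟨fun q => toCoord b x q.out, ?_⟩
    rw [Phi_apply]
    conv_rhs => rw [← ofCoord_toCoord b x, ofCoord_apply]
    rw [← Finset.sum_fiberwise_of_maps_to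
      (fun f _ => Finset.mem_univ (Quotient.mk (pr p ι) f)) (fun f => toCoord b x f • Bt b f)]
    refine Finset.sum_congr rfl fun q _ => ?_
    rw [orbitSum, Finset.smul_sum]
    refine Finset.sum_congr rfl fun f hf => ?_
    rw [Finset.mem_filter] at hf
    obtain ⟨σ, hσ⟩ : (pr p ι).r q.out f := Quotient.exact (by rw [Quotient.out_eq, hf.2])
    rw [hσ, coord_const_on_orbit b x hx q.out σ]
  · rw [LinearMap.range_le_iff_comap, eq_top_iff]
    intro y _
    rw [Submodule.mem_comap, Phi_apply]
    exact Submodule.sum_mem _ fun q _ => Submodule.smul_mem _ _ (orbitSum_mem b q)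

lemma coord_Phi_out (b : Module.Basis ι k V) (y : Quotient (pr p ι) → k)
    (q : Quotient (pr p ι)) : toCoord b (Phi b y) q.out = y q := by
  rw [Phi_apply, map_sum]
  simp only [map_smul, Finset.sum_apply, Pi.smul_apply, smul_eq_mul]
  have horb : ∀ q' : Quotient (pr p ι),
      toCoord b (orbitSum b q') q.out = if q' = q then 1 else 0 := by
    intro q'
    rw [orbitSum, map_sum]
    simp only [Finset.sum_apply, toCoord_Bt]
    rw [Finset.sum_ite_eq _ q.out (fun _ => (1:k))]
    by_cases hq : q' = q
    · subst hq
      rw [if_pos, if_pos rfl]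
      rw [Finset.mem_filter]
      exact ⟨Finset.mem_univ _, Quotient.out_eq _⟩
    · rw [if_neg, if_neg hq]
      rw [Finset.mem_filter]
      rintro ⟨-, hc⟩
      rw [Quotient.out_eq] at hc
      exact hq hc.symm
  rw [Finset.sum_congr rfl fun q' _ => by rw [horb q']]
  simp only [mul_ite, mul_one, mul_zero]
  rw [Finset.sum_ite_eq' Finset.univ q y]
  simp

lemma Phi_inj (b : Module.Basis ι k V) : Function.Injective (Phi (p := p) b) := by
  rw [← LinearMap.ker_eq_bot, eq_bot_iff]
  intro y hy
  rw [LinearMap.mem_ker] at hy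
  rw [Submodule.mem_bot]
  funext q
  rw [← coord_Phi_out b y q, hy, map_zero]
  rfl

lemma finrank_gamma (b : Module.Basis ι k V) :
    Module.finrank k (dividedPower k V p) = Fintype.card (Quotient (pr p ι)) := by
  rw [gamma_eq_range_Phi b,
    ← (LinearEquiv.ofInjective (Phi b) (Phi_inj b)).finrank_eq, Module.finrank_pi]

variable [CharP k p] in
lemma ker_alpha_eq_span_const (b : Module.Basis ι k V) (hp' : p.Prime) :
    LinearMap.ker (alpha k V p) = Submodule.span k (Set.range fun i : ι =>
      (Submodule.Quotient.mk (Bt b (fun _ : Fin p => i)) :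
        (⨂[k]^p V) ⧸ symRelations k V p)) := by
  rw [ker_alpha_eq_map, kerN_eq b hp', Submodule.map_sup, Submodule.mkQ_map_self,
    bot_sup_eq, Submodule.map_span, ← Set.range_comp]
  rfl

variable [CharP k p] in
lemma ker_alpha_span (b : Module.Basis ι k V) (hp' : p.Prime) (hp : 0 < p) :
    LinearMap.ker (alpha k V p) = Submodule.span k
      (Set.range fun v : V =>
        (Submodule.Quotient.mk (tprod k fun _ : Fin p => v) :
          (⨂[k]^p V) ⧸ symRelations k V p)) := by
  rw [ker_alpha_eq_span_const b hp']
  apply le_antisymm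
  · rw [Submodule.span_le]
    rintro z ⟨i, rfl⟩
    exact Submodule.subset_span ⟨b i, rfl⟩
  · rw [← ker_alpha_eq_span_const b hp', Submodule.span_le]
    rintro z ⟨v, rfl⟩
    rw [SetLike.mem_coe, LinearMap.mem_ker]
    apply Subtype.coe_injective
    show (alpha k V p (Submodule.Quotient.mk (tprod k fun _ : Fin p => v)) : ⨂[k]^p V) =
      ((0 : dividedPower k V p) : ⨂[k]^p V)
    rw [alpha_mk, ZeroMemClass.coe_zero]
    exact N_tprod_const hp v

variable [CharP k p] in
lemma finrank_ker_alpha (b : Module.Basis ι k V) (hp' : p.Prime) (hp : 0 < p) :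
    Module.finrank k (LinearMap.ker (alpha k V p)) = Fintype.card ι := by
  rw [ker_alpha_eq_span_const b hp']
  have hκ : Function.Injective
      (fun i : ι => Quotient.mk (pr p ι) (fun _ : Fin p => i)) := by
    intro i j hij
    obtain ⟨σ, hσ⟩ := Quotient.exact hij
    exact (congrFun hσ ⟨0, hp⟩).symm
  have h2 : LinearIndependent k (fun i : ι =>
      (Pi.single (Quotient.mk (pr p ι) (fun _ : Fin p => i)) (1:k) :
        Quotient (pr p ι) → k)) := by
    have h : LinearIndependent k ((⇑(Pi.basisFun k (Quotient (pr p ι)))) ∘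
        (fun i : ι => Quotient.mk (pr p ι) (fun _ : Fin p => i))) :=
      (Pi.basisFun k (Quotient (pr p ι))).linearIndependent.comp
        (fun i : ι => Quotient.mk (pr p ι) (fun _ : Fin p => i)) hκ
    have heq : (⇑(Pi.basisFun k (Quotient (pr p ι))) ∘
        fun i : ι => Quotient.mk (pr p ι) (fun _ : Fin p => i)) =
        fun i : ι => (Pi.single (Quotient.mk (pr p ι) (fun _ : Fin p => i)) (1:k) :
          Quotient (pr p ι) → k) := by
      funext i
      rw [Function.comp_apply, Pi.basisFun_apply]
    rwa [heq] at h
  have hli : LinearIndependent k (fun i : ι =>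
      (Submodule.Quotient.mk (Bt b (fun _ : Fin p => i)) :
        (⨂[k]^p V) ⧸ symRelations k V p)) := by
    apply LinearIndependent.of_comp (thetaBar b)
    have h3 : (⇑(thetaBar (p := p) b) ∘ fun i : ι =>
        (Submodule.Quotient.mk (Bt b (fun _ : Fin p => i)) :
          (⨂[k]^p V) ⧸ symRelations k V p)) =
        fun i : ι => (Pi.single (Quotient.mk (pr p ι) (fun _ : Fin p => i)) (1:k) :
          Quotient (pr p ι) → k) := by
      funext i
      rw [Function.comp_apply]
      show thetaBar b (Submodule.Quotient.mk (Bt b fun _ => i)) = _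
      rw [thetaBar, Submodule.liftQ_apply, theta_Bt]
    rw [h3]
    exact h2
  exact finrank_span_eq_card hli

lemma finrank_sp (b : Module.Basis ι k V) :
    Module.finrank k ((⨂[k]^p V) ⧸ symRelations k V p) =
      Fintype.card (Quotient (pr p ι)) :=
  ((LinearEquiv.ofBijective (thetaBar b) (thetaBar_bij b)).finrank_eq).trans
    (Module.finrank_pi k)

end Stmt6

/-- let `k` be a field of characteristic `p > 0` and `V` a
finite-dimensional `k`-vector space. The symmetrization operator `N` kills all elements
`x - σ·x`, has image inside `Γᵖ(V)`, and hence induces a map `α_V : Sᵖ(V) → Γᵖ(V)`.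
Moreover (i) the kernel of `α_V` is the span of the classes `q(v^{⊗p})` (`v ∈ V`);
(ii) `dim ker(α_V) = dim V`; and (iii) `dim (Γᵖ(V) / im(α_V)) = dim V`. -/
theorem stmt_6 {k : Type*} [Field k] (p : ℕ) [CharP k p] (hp : 0 < p)
    (V : Type*) [AddCommGroup V] [Module k V] [FiniteDimensional k V] :
    (∀ (x : ⨂[k]^p V) (σ : Equiv.Perm (Fin p)),
      symmetrization k V p (x - permAction k V σ x) = 0) ∧
    (∀ x : ⨂[k]^p V, symmetrization k V p x ∈ dividedPower k V p) ∧
    ∃ α : ((⨂[k]^p V) ⧸ symRelations k V p) →ₗ[k] dividedPower k V p,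
      (∀ x : ⨂[k]^p V,
        (α (Submodule.Quotient.mk x) : ⨂[k]^p V) = symmetrization k V p x) ∧
      LinearMap.ker α = Submodule.span k
        (Set.range fun v : V =>
          (Submodule.Quotient.mk (PiTensorProduct.tprod k fun _ : Fin p => v) :
            (⨂[k]^p V) ⧸ symRelations k V p)) ∧
      Module.finrank k (LinearMap.ker α) = Module.finrank k V ∧
      Module.finrank k (↥(dividedPower k V p) ⧸ LinearMap.range α) =
        Module.finrank k V := by
  classical
  haveI : NeZero p := ⟨hp.ne'⟩
  have hp' : p.Prime := (CharP.char_is_prime_of_pos k p).out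
  let b : Module.Basis (Fin (Module.finrank k V)) k V := Module.finBasis k V
  haveI hfd : FiniteDimensional k (⨂[k]^p V) := Module.Finite.equiv (Stmt6.E b).symm
  refine ⟨Stmt6.P2.item1 k V, Stmt6.P2.item2 k V, Stmt6.alpha k V p,
    fun x => Stmt6.alpha_mk x, Stmt6.ker_alpha_span b hp' hp, ?_, ?_⟩
  · rw [Stmt6.finrank_ker_alpha b hp' hp, Fintype.card_fin]
  · have e1 := Submodule.finrank_quotient_add_finrank (LinearMap.range (Stmt6.alpha k V p))
    have e2 := LinearMap.finrank_range_add_finrank_ker (Stmt6.alpha k V p)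
    have e3 := Stmt6.finrank_sp (p := p) b
    have e4 := Stmt6.finrank_gamma (p := p) b
    have e5 := Stmt6.finrank_ker_alpha b hp' hp
    rw [Fintype.card_fin] at e5
    omega
end

section
/- Let k be a field of characteristic 2, let m ≥ 1, n ≥ 1, and let R = k[x_1, …, x_m, y_1, …, y_m] be a polynomial ring. Define the k-linear operator d = Σ_{i=1}^{m} y_i · ∂/∂x_i on R. Then: (a) d ∘ d = 0; (b) for 0 ≤ j ≤ 2n, letting C^j denote the k-span of monomials of total degree 2n − j in the variables x_1, …, x_m and total degree j in the variables y_1, …, y_m, one has d(C^j) ⊆ C^{j+1}; (c) the kernel of d restricted to C^0 equals the k-linear span of the squares g² of homogeneous polynomials g of degree n in x_1, …, x_m; and (d) for 1 ≤ j ≤ 2n, the kernel of d restricted to C^j equals d(C^{j−1}). -/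
/-- The operator `d = Σᵢ yᵢ ∂/∂xᵢ` on the polynomial ring
`R = k[x₁, …, x_m, y₁, …, y_m]`, where `xᵢ = X (inl i)` and `yᵢ = X (inr i)`. -/
noncomputable def koszulD (k : Type*) [CommRing k] (m : ℕ) :
    MvPolynomial (Fin m ⊕ Fin m) k →ₗ[k] MvPolynomial (Fin m ⊕ Fin m) k :=
  ∑ i : Fin m,
    (MvPolynomial.X (Sum.inr i) : MvPolynomial (Fin m ⊕ Fin m) k) •
      ((MvPolynomial.pderiv (Sum.inl i) :
          Derivation k (MvPolynomial (Fin m ⊕ Fin m) k)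
            (MvPolynomial (Fin m ⊕ Fin m) k)).toLinearMap)

/-- The `k`-span of the monomials of total degree `a` in the variables `x₁, …, x_m`
(the `inl` variables) and total degree `b` in the variables `y₁, …, y_m`
(the `inr` variables). -/
noncomputable def biComponent (k : Type*) [CommRing k] (m : ℕ) (a b : ℕ) :
    Submodule k (MvPolynomial (Fin m ⊕ Fin m) k) :=
  Submodule.span k
    {q | ∃ s : (Fin m ⊕ Fin m) →₀ ℕ, q = MvPolynomial.monomial s (1 : k) ∧
      (∑ i : Fin m, s (Sum.inl i)) = a ∧ (∑ i : Fin m, s (Sum.inr i)) = b}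

open MvPolynomial

namespace Stmt7Aux

variable {k : Type*} [CommRing k] {m : ℕ}

abbrev Idx (m : ℕ) := Fin m ⊕ Fin m
abbrev Mono (m : ℕ) := Idx m →₀ ℕ

def xdeg (s : Mono m) : ℕ := ∑ i : Fin m, s (Sum.inl i)
def ydeg (s : Mono m) : ℕ := ∑ i : Fin m, s (Sum.inr i)

noncomputable def down (i : Fin m) (s : Mono m) : Mono m :=
  (s - Finsupp.single (Sum.inl i) 1) + Finsupp.single (Sum.inr i) 1

noncomputable def up (i : Fin m) (s : Mono m) : Mono m :=
  (s - Finsupp.single (Sum.inr i) 1) + Finsupp.single (Sum.inl i) 1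

@[simp] lemma down_inl (i j : Fin m) (s : Mono m) :
    down i s (Sum.inl j) = if j = i then s (Sum.inl i) - 1 else s (Sum.inl j) := by
  simp [down, Finsupp.tsub_apply, Finsupp.single_apply, eq_comm]
  split <;> simp_all

@[simp] lemma down_inr (i j : Fin m) (s : Mono m) :
    down i s (Sum.inr j) = s (Sum.inr j) + if j = i then 1 else 0 := by
  simp [down, Finsupp.tsub_apply, Finsupp.single_apply, eq_comm]

@[simp] lemma up_inl (i j : Fin m) (s : Mono m) :
    up i s (Sum.inl j) = s (Sum.inl j) + if j = i then 1 else 0 := by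
  simp [up, Finsupp.tsub_apply, Finsupp.single_apply, eq_comm]

@[simp] lemma up_inr (i j : Fin m) (s : Mono m) :
    up i s (Sum.inr j) = if j = i then s (Sum.inr i) - 1 else s (Sum.inr j) := by
  simp [up, Finsupp.tsub_apply, Finsupp.single_apply, eq_comm]
  split <;> simp_all

lemma up_down (i : Fin m) (s : Mono m) (h : s (Sum.inl i) ≠ 0) : up i (down i s) = s := by
  ext a
  rcases a with j | j <;>
    simp only [up_inl, up_inr, down_inl, down_inr] <;>
    by_cases hj : j = i <;> simp_all <;> omega

lemma down_up (i : Fin m) (s : Mono m) (h : s (Sum.inr i) ≠ 0) : down i (up i s) = s := by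
  ext a
  rcases a with j | j <;>
    simp only [up_inl, up_inr, down_inl, down_inr] <;>
    by_cases hj : j = i <;> simp_all <;> omega

lemma up_down_comm (i l : Fin m) (hil : i ≠ l) (s : Mono m) :
    up i (down l s) = down l (up i s) := by
  ext a
  rcases a with j | j <;>
    simp only [up_inl, up_inr, down_inl, down_inr] <;>
    by_cases h1 : j = i <;> by_cases h2 : j = l <;> simp_all <;> omega

lemma down_comm (i l : Fin m) (s : Mono m) (hi : s (Sum.inl i) ≠ 0) (hl : s (Sum.inl l) ≠ 0) :
    down i (down l s) = down l (down i s) := by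
  rcases eq_or_ne i l with rfl | hil
  · rfl
  ext a
  rcases a with j | j <;>
    simp only [up_inl, up_inr, down_inl, down_inr] <;>
    by_cases h1 : j = i <;> by_cases h2 : j = l <;> simp_all <;> omega



/-- indices where the x-exponent is odd -/
def oddset (s : Mono m) : Finset (Fin m) :=
  Finset.univ.filter (fun l => Odd (s (Sum.inl l)))

lemma mem_oddset {s : Mono m} {l : Fin m} : l ∈ oddset s ↔ Odd (s (Sum.inl l)) := by
  simp [oddset]

lemma cast_char2 [CharP k 2] (a : ℕ) : ((a : k)) = if Odd a then 1 else 0 := by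
  have h2 : (2 : k) = 0 := by exact_mod_cast CharP.cast_eq_zero k 2
  rcases Nat.even_or_odd a with ⟨t, rfl⟩ | ⟨t, rfl⟩
  · push_cast
    rw [← two_mul, h2, zero_mul, if_neg]
    simp [Nat.odd_iff]
    omega
  · push_cast
    rw [h2, zero_mul, zero_add, if_pos ⟨t, rfl⟩]

lemma koszulD_apply (f : MvPolynomial (Idx m) k) :
    koszulD k m f = ∑ i : Fin m, X (Sum.inr i) * pderiv (Sum.inl i) f := by
  simp [koszulD, smul_eq_mul]

/-- the key formula for d on a monomial, in characteristic 2 -/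
lemma koszulD_monomial [CharP k 2] (s : Mono m) (c : k) :
    koszulD k m (monomial s c) = ∑ l ∈ oddset s, monomial (down l s) c := by
  rw [koszulD_apply]
  have h1 : ∀ i : Fin m, X (Sum.inr i) * pderiv (Sum.inl i) (monomial s c)
      = monomial (down i s) (c * (s (Sum.inl i) : k)) := by
    intro i
    rw [pderiv_monomial, X, monomial_mul, one_mul, add_comm]
    rfl
  rw [Finset.sum_congr rfl (fun i _ => h1 i)]
  rw [show oddset s = Finset.univ.filter (fun l => Odd (s (Sum.inl l))) from rfl]
  rw [Finset.sum_filter]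
  apply Finset.sum_congr rfl
  intro i _
  rw [cast_char2]
  split
  · simp
  · simp

lemma oddset_down (l : Fin m) (s : Mono m) (hl : l ∈ oddset s) :
    oddset (down l s) = (oddset s).erase l := by
  have hodd : Odd (s (Sum.inl l)) := mem_oddset.mp hl
  ext i
  rw [mem_oddset, Finset.mem_erase, mem_oddset, down_inl]
  rcases eq_or_ne i l with rfl | hi
  · simp only [if_pos rfl]
    constructor
    · intro h
      exfalso
      rcases hodd with ⟨t, ht⟩
      rcases h with ⟨u, hu⟩
      simp at hu
      omega
    · intro ⟨h, _⟩
      exact absurd rfl h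
  · simp [hi]

theorem koszulD_comp_koszulD [CharP k 2] : koszulD k m ∘ₗ koszulD k m = 0 := by
  apply LinearMap.ext
  intro f
  induction f using MvPolynomial.induction_on' with
  | add p q hp hq =>
    simp only [LinearMap.comp_apply, map_add, LinearMap.zero_apply] at hp hq ⊢
    rw [hp, hq, add_zero]
  | monomial s c =>
    simp only [LinearMap.comp_apply, LinearMap.zero_apply]
    rw [koszulD_monomial, map_sum]
    have step : ∀ l ∈ oddset s, koszulD k m (monomial (down l s) c)
        = ∑ l' ∈ (oddset s).erase l, monomial (down l' (down l s)) c := by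
      intro l hl
      rw [koszulD_monomial, oddset_down l s hl]
    rw [Finset.sum_congr rfl step]
    have conv1 : ∀ l ∈ oddset s, ∑ l' ∈ (oddset s).erase l, monomial (down l' (down l s)) c
        = ∑ l' ∈ oddset s, if l' ≠ l then monomial (down l' (down l s)) c else 0 := by
      intro l _
      rw [← Finset.sum_filter, Finset.filter_ne']
    rw [Finset.sum_congr rfl conv1, ← Finset.sum_product']
    apply Finset.sum_involution (fun p _ => (p.2, p.1))
    · intro p hp
      rcases p with ⟨l, l'⟩
      simp only [Finset.mem_product] at hp
      rcases eq_or_ne l' l with rfl | hne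
      · simp
      · rw [if_pos hne, if_pos (Ne.symm hne)]
        have hl : s (Sum.inl l) ≠ 0 := by
          rcases mem_oddset.mp hp.1 with ⟨t, ht⟩; omega
        have hl' : s (Sum.inl l') ≠ 0 := by
          rcases mem_oddset.mp hp.2 with ⟨t, ht⟩; omega
        rw [down_comm l' l s hl' hl]
        exact CharTwo.add_self_eq_zero _
    · intro p hp hne
      rcases p with ⟨l, l'⟩
      intro hcon
      simp only [Prod.mk.injEq] at hcon
      apply hne
      rcases hcon with ⟨h1, h2⟩
      rw [h1] at *
      simp
    · intro p hp
      simp only [Finset.mem_product] at hp ⊢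
      exact ⟨hp.2, hp.1⟩
    · intro p hp
      rfl

/-- index `i` is "non-harmonic" for the monomial `s` -/
def isBad (s : Mono m) (i : Fin m) : Prop := s (Sum.inr i) ≠ 0 ∨ Odd (s (Sum.inl i))

instance (s : Mono m) (i : Fin m) : Decidable (isBad s i) := by unfold isBad; infer_instance

def bad (s : Mono m) : Finset (Fin m) := Finset.univ.filter (fun i => isBad s i)

lemma mem_bad {s : Mono m} {i : Fin m} : i ∈ bad s ↔ isBad s i := by simp [bad]

lemma min'_eq_of {T : Finset (Fin m)} {i : Fin m} (hi : i ∈ T)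
    (hlt : ∀ j, j < i → j ∉ T) (h : T.Nonempty) : T.min' h = i := by
  have h1 := T.min'_le i hi
  have h2 := T.min'_mem h
  rcases lt_or_ge (T.min' h) i with hc | hc
  · exact absurd h2 (hlt _ hc)
  · exact le_antisymm h1 hc

/-- the value of the contracting homotopy on the monomial `s` -/
noncomputable def Hmono (k : Type*) [CommRing k] {m : ℕ} (s : Mono m) :
    MvPolynomial (Idx m) k :=
  if h : (bad s).Nonempty then
    (if s (Sum.inr ((bad s).min' h)) ≠ 0 ∧ Even (s (Sum.inl ((bad s).min' h)))
      then monomial (up ((bad s).min' h) s) (1 : k) else 0)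
  else 0

/-- the contracting homotopy -/
noncomputable def Hmap (k : Type*) [CommRing k] (m : ℕ) :
    MvPolynomial (Idx m) k →ₗ[k] MvPolynomial (Idx m) k :=
  (MvPolynomial.basisMonomials (Idx m) k).constr k (Hmono k)

lemma Hmap_monomial (s : Mono m) (c : k) : Hmap k m (monomial s c) = c • Hmono k s := by
  have : (monomial s c : MvPolynomial (Idx m) k) = c • (MvPolynomial.basisMonomials (Idx m) k s) := by
    rw [MvPolynomial.coe_basisMonomials]
    rw [MvPolynomial.smul_monomial, smul_eq_mul, mul_one]
  rw [this, map_smul, Hmap, Module.Basis.constr_basis]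

lemma Hmono_eq {s : Mono m} {i : Fin m} (hbad : isBad s i) (hlt : ∀ j, j < i → ¬ isBad s j) :
    Hmono k s = if s (Sum.inr i) ≠ 0 ∧ Even (s (Sum.inl i))
      then monomial (up i s) (1 : k) else 0 := by
  have hne : (bad s).Nonempty := ⟨i, mem_bad.mpr hbad⟩
  have hmin : (bad s).min' hne = i :=
    min'_eq_of (mem_bad.mpr hbad) (fun j hj hm => hlt j hj (mem_bad.mp hm)) hne
  rw [Hmono, dif_pos hne, hmin]

lemma homotopy [CharP k 2] (s : Mono m) (hne : (bad s).Nonempty) (c : k) :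
    koszulD k m (Hmap k m (monomial s c)) + Hmap k m (koszulD k m (monomial s c))
      = monomial s c := by
  have hbad : isBad s ((bad s).min' hne) := mem_bad.mp ((bad s).min'_mem hne)
  set i₀ := (bad s).min' hne with hi₀def
  have hlt : ∀ j, j < i₀ → ¬ isBad s j := fun j hj hb =>
    absurd ((bad s).min'_le j (mem_bad.mpr hb)) (not_le.mpr hj)
  rw [koszulD_monomial, map_sum, Hmap_monomial]
  by_cases hodd : Odd (s (Sum.inl i₀))
  · -- Case A : the x-exponent at i₀ is odd
    have h0 : Hmono k s = 0 := by
      rw [Hmono_eq hbad hlt, if_neg]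
      rintro ⟨h1, h2⟩
      rw [Nat.even_iff] at h2
      rw [Nat.odd_iff] at hodd
      omega
    rw [h0, smul_zero, map_zero, zero_add]
    have hterm : ∀ l ∈ oddset s, Hmap k m (monomial (down l s) c)
        = if l = i₀ then monomial s c else 0 := by
      intro l hl
      have hodd_l : Odd (s (Sum.inl l)) := mem_oddset.mp hl
      have hi₀l : i₀ ≤ l := (bad s).min'_le l (mem_bad.mpr (Or.inr hodd_l))
      rw [Hmap_monomial]
      rcases eq_or_ne l i₀ with rfl | hne'
      · have hb : isBad (down i₀ s) i₀ := Or.inl (by rw [down_inr, if_pos rfl]; omega)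
        have hl2 : ∀ j, j < i₀ → ¬ isBad (down i₀ s) j := by
          intro j hj
          have hjl : j ≠ i₀ := ne_of_lt hj
          unfold isBad
          rw [down_inr, down_inl, if_neg hjl, if_neg hjl, add_zero]
          exact hlt j hj
        rw [if_pos rfl, Hmono_eq hb hl2, if_pos, up_down]
        · rw [MvPolynomial.smul_monomial, smul_eq_mul, mul_one]
        · rw [Nat.odd_iff] at hodd_l; omega
        · constructor
          · rw [down_inr, if_pos rfl]; omega
          · rw [down_inl, if_pos rfl, Nat.even_iff]
            rw [Nat.odd_iff] at hodd_l
            omega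
      · have hi₀lt : i₀ < l := lt_of_le_of_ne hi₀l (Ne.symm hne')
        have hb : isBad (down l s) i₀ := by
          refine Or.inr ?_
          rw [down_inl, if_neg hne'.symm]
          exact hodd
        have hl2 : ∀ j, j < i₀ → ¬ isBad (down l s) j := by
          intro j hj
          have hjl : j ≠ l := ne_of_lt (lt_trans hj hi₀lt)
          unfold isBad
          rw [down_inr, down_inl, if_neg hjl, if_neg hjl, add_zero]
          exact hlt j hj
        rw [if_neg hne', Hmono_eq hb hl2, if_neg, smul_zero]
        rintro ⟨h1, h2⟩
        rw [down_inl, if_neg hne'.symm, Nat.even_iff] at h2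
        rw [Nat.odd_iff] at hodd
        omega
    rw [Finset.sum_congr rfl hterm, Finset.sum_ite_eq' (oddset s) i₀ (fun _ => monomial s c),
      if_pos (mem_oddset.mpr hodd)]
  · -- Case B : the y-exponent at i₀ is nonzero and the x-exponent is even
    have hyne : s (Sum.inr i₀) ≠ 0 := hbad.resolve_right hodd
    have heven : Even (s (Sum.inl i₀)) := Nat.not_odd_iff_even.mp hodd
    have hH : Hmono k s = monomial (up i₀ s) 1 := by
      rw [Hmono_eq hbad hlt, if_pos ⟨hyne, heven⟩]
    rw [hH, map_smul, koszulD_monomial]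
    have hoddup : oddset (up i₀ s) = insert i₀ (oddset s) := by
      ext j
      rw [mem_oddset, Finset.mem_insert, mem_oddset, up_inl]
      rcases eq_or_ne j i₀ with rfl | hj
      · rw [if_pos rfl]
        simp only [eq_self_iff_true, true_or, iff_true]
        rw [Nat.odd_iff]
        rw [Nat.even_iff] at heven
        omega
      · simp [hj]
    have hnotmem : i₀ ∉ oddset s := fun h => hodd (mem_oddset.mp h)
    rw [hoddup, Finset.sum_insert hnotmem, down_up i₀ s hyne]
    have hterm : ∀ l ∈ oddset s, Hmap k m (monomial (down l s) c)
        = c • monomial (down l (up i₀ s)) (1 : k) := by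
      intro l hl
      have hodd_l : Odd (s (Sum.inl l)) := mem_oddset.mp hl
      have hne' : l ≠ i₀ := fun h => hodd (h ▸ hodd_l)
      have hi₀l : i₀ ≤ l := (bad s).min'_le l (mem_bad.mpr (Or.inr hodd_l))
      have hi₀lt : i₀ < l := lt_of_le_of_ne hi₀l (Ne.symm hne')
      have hb : isBad (down l s) i₀ := by
        refine Or.inl ?_
        rw [down_inr, if_neg hne'.symm, add_zero]
        exact hyne
      have hl2 : ∀ j, j < i₀ → ¬ isBad (down l s) j := by
        intro j hj
        have hjl : j ≠ l := ne_of_lt (lt_trans hj hi₀lt)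
        unfold isBad
        rw [down_inr, down_inl, if_neg hjl, if_neg hjl, add_zero]
        exact hlt j hj
      rw [Hmap_monomial, Hmono_eq hb hl2, if_pos, up_down_comm i₀ l (fun h => hne' h.symm) s]
      constructor
      · rw [down_inr, if_neg hne'.symm, add_zero]; exact hyne
      · rw [down_inl, if_neg hne'.symm]; exact heven
    rw [Finset.sum_congr rfl hterm, ← Finset.smul_sum, smul_add, add_assoc,
      CharTwo.add_self_eq_zero, add_zero, MvPolynomial.smul_monomial, smul_eq_mul, mul_one]


lemma monomial_mem_biComponent {a b : ℕ} (s : Mono m) (c : k)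
    (h1 : xdeg s = a) (h2 : ydeg s = b) : monomial s c ∈ biComponent k m a b := by
  have : (monomial s c : MvPolynomial (Idx m) k) = c • monomial s 1 := by
    rw [MvPolynomial.smul_monomial, smul_eq_mul, mul_one]
  rw [this]
  exact Submodule.smul_mem _ c (Submodule.subset_span ⟨s, rfl, h1, h2⟩)

lemma xdeg_down {l : Fin m} {s : Mono m} (h : s (Sum.inl l) ≠ 0) :
    xdeg (down l s) + 1 = xdeg s := by
  unfold xdeg
  rw [← Finset.add_sum_erase _ _ (Finset.mem_univ l),
    ← Finset.add_sum_erase _ (fun j => s (Sum.inl j)) (Finset.mem_univ l),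
    Finset.sum_congr rfl (fun j hj => by
      rw [down_inl, if_neg (Finset.ne_of_mem_erase hj)]),
    down_inl, if_pos rfl]
  omega

lemma ydeg_down (l : Fin m) (s : Mono m) : ydeg (down l s) = ydeg s + 1 := by
  unfold ydeg
  rw [← Finset.add_sum_erase _ _ (Finset.mem_univ l),
    ← Finset.add_sum_erase _ (fun j => s (Sum.inr j)) (Finset.mem_univ l),
    Finset.sum_congr rfl (fun j hj => by
      rw [down_inr, if_neg (Finset.ne_of_mem_erase hj), add_zero]),
    down_inr, if_pos rfl]
  omega

lemma xdeg_up (l : Fin m) (s : Mono m) : xdeg (up l s) = xdeg s + 1 := by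
  unfold xdeg
  rw [← Finset.add_sum_erase _ _ (Finset.mem_univ l),
    ← Finset.add_sum_erase _ (fun j => s (Sum.inl j)) (Finset.mem_univ l),
    Finset.sum_congr rfl (fun j hj => by
      rw [up_inl, if_neg (Finset.ne_of_mem_erase hj), add_zero]),
    up_inl, if_pos rfl]
  omega

lemma ydeg_up {l : Fin m} {s : Mono m} (h : s (Sum.inr l) ≠ 0) :
    ydeg (up l s) + 1 = ydeg s := by
  unfold ydeg
  rw [← Finset.add_sum_erase _ _ (Finset.mem_univ l),
    ← Finset.add_sum_erase _ (fun j => s (Sum.inr j)) (Finset.mem_univ l),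
    Finset.sum_congr rfl (fun j hj => by
      rw [up_inr, if_neg (Finset.ne_of_mem_erase hj)]),
    up_inr, if_pos rfl]
  omega

lemma koszulD_monomial_mem [CharP k 2] {a b : ℕ} (s : Mono m) (c : k)
    (h1 : xdeg s = a) (h2 : ydeg s = b) :
    koszulD k m (monomial s c) ∈ biComponent k m (a - 1) (b + 1) := by
  rw [koszulD_monomial]
  apply Submodule.sum_mem
  intro l hl
  have hodd : Odd (s (Sum.inl l)) := mem_oddset.mp hl
  have hnz : s (Sum.inl l) ≠ 0 := by rw [Nat.odd_iff] at hodd; omega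
  apply monomial_mem_biComponent
  · have := xdeg_down hnz; omega
  · rw [ydeg_down, h2]

lemma Hmono_mem {a b : ℕ} (s : Mono m) (h1 : xdeg s = a) (h2 : ydeg s = b) :
    Hmono k s ∈ biComponent k m (a + 1) (b - 1) := by
  rw [Hmono]
  split
  case isFalse => exact Submodule.zero_mem _
  case isTrue h =>
    split
    case isFalse => exact Submodule.zero_mem _
    case isTrue hcond =>
      apply monomial_mem_biComponent
      · rw [xdeg_up, h1]
      · have := ydeg_up hcond.1; omega

lemma exists_y_ne_zero {s : Mono m} (h : ydeg s ≠ 0) : ∃ i, s (Sum.inr i) ≠ 0 := by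
  by_contra hc
  push_neg at hc
  exact h (Finset.sum_eq_zero (fun i _ => hc i))

/-- the homotopy identity on components with positive y-degree -/
lemma homotopy_on [CharP k 2] {a b : ℕ} (hb : b ≠ 0) {f : MvPolynomial (Idx m) k}
    (hf : f ∈ biComponent k m a b) :
    koszulD k m (Hmap k m f) + Hmap k m (koszulD k m f) = f := by
  have key : f ∈ LinearMap.eqLocus
      (koszulD k m ∘ₗ Hmap k m + Hmap k m ∘ₗ koszulD k m) LinearMap.id := by
    refine le_trans (le_of_eq (show biComponent k m a b = _ from rfl))
      (Submodule.span_le.mpr ?_) hf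
    rintro q ⟨s, rfl, hs1, hs2⟩
    have hyne : ydeg s ≠ 0 := by rw [show ydeg s = b from hs2]; exact hb
    obtain ⟨i, hi⟩ := exists_y_ne_zero hyne
    have hne : (bad s).Nonempty := ⟨i, mem_bad.mpr (Or.inl hi)⟩
    have := homotopy s hne (1 : k)
    simpa [LinearMap.eqLocus] using this
  simpa using key

section FieldPart
variable [Nontrivial k]

lemma support_biComponent {a b : ℕ} {f : MvPolynomial (Idx m) k}
    (hf : f ∈ biComponent k m a b) :
    ∀ s ∈ f.support, xdeg s = a ∧ ydeg s = b := by
  refine Submodule.span_induction (p := fun g _ => ∀ s ∈ g.support, xdeg s = a ∧ ydeg s = b)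
    ?_ ?_ ?_ ?_ hf
  · rintro q ⟨s, rfl, hs1, hs2⟩ t ht
    classical
    rw [MvPolynomial.support_monomial, if_neg one_ne_zero] at ht
    rw [Finset.mem_singleton] at ht
    subst ht
    exact ⟨hs1, hs2⟩
  · intro s hs
    simp at hs
  · intro x y _ _ hx hy s hs
    rcases Finset.mem_union.mp (MvPolynomial.support_add hs) with h | h
    · exact hx s h
    · exact hy s h
  · intro c x _ hx s hs
    exact hx s (MvPolynomial.support_smul hs)

end FieldPart

lemma down_inj {s s₀ : Mono m} {l i : Fin m}
    (hs : ∀ j, s (Sum.inr j) = 0) (hs₀ : ∀ j, s₀ (Sum.inr j) = 0)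
    (hl : s (Sum.inl l) ≠ 0) (hi : s₀ (Sum.inl i) ≠ 0)
    (h : down l s = down i s₀) : s = s₀ ∧ l = i := by
  have hli : l = i := by
    have h1 := DFunLike.congr_fun h (Sum.inr l)
    rw [down_inr, down_inr, if_pos rfl, hs l, hs₀ l] at h1
    by_contra hc
    rw [if_neg hc] at h1
    omega
  subst hli
  refine ⟨?_, rfl⟩
  ext a
  rcases a with j | j
  · have h1 := DFunLike.congr_fun h (Sum.inl j)
    rw [down_inl, down_inl] at h1
    by_cases hj : j = l
    · subst hj
      rw [if_pos rfl, if_pos rfl] at h1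
      omega
    · rwa [if_neg hj, if_neg hj] at h1
  · rw [hs j, hs₀ j]

lemma odd_ne_zero {a : ℕ} (h : Odd a) : a ≠ 0 := by rw [Nat.odd_iff] at h; omega

lemma even_exponents [CharP k 2] {f : MvPolynomial (Idx m) k}
    (hy : ∀ s ∈ f.support, ydeg s = 0) (hdf : koszulD k m f = 0) :
    ∀ s ∈ f.support, ∀ i : Fin m, ¬ Odd (s (Sum.inl i)) := by
  have hyz : ∀ s ∈ f.support, ∀ j, s (Sum.inr j) = 0 := by
    intro s hs j
    have h := hy s hs
    unfold ydeg at h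
    exact Finset.sum_eq_zero_iff.mp h j (Finset.mem_univ j)
  intro s₀ hs₀ i hodd
  have hco : MvPolynomial.coeff (down i s₀) (koszulD k m f) = MvPolynomial.coeff s₀ f := by
    conv_lhs => rw [MvPolynomial.as_sum f]
    rw [map_sum, MvPolynomial.coeff_sum]
    rw [Finset.sum_congr rfl (fun s _ => by
      rw [koszulD_monomial, MvPolynomial.coeff_sum] :
        ∀ s ∈ f.support, MvPolynomial.coeff (down i s₀) (koszulD k m
          (monomial s (MvPolynomial.coeff s f)))
          = ∑ l ∈ oddset s, MvPolynomial.coeff (down i s₀) (monomial (down l s)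
              (MvPolynomial.coeff s f)))]
    rw [Finset.sum_eq_single s₀ ?side1 ?side2]
    case side1 =>
      intro s hs hne
      apply Finset.sum_eq_zero
      intro l hlmem
      rw [MvPolynomial.coeff_monomial, if_neg]
      intro hc
      exact hne (down_inj (hyz s hs) (hyz s₀ hs₀)
        (odd_ne_zero (mem_oddset.mp hlmem)) (odd_ne_zero hodd) hc).1
    case side2 =>
      intro hc
      exact absurd hs₀ hc
    rw [Finset.sum_eq_single i ?side3 ?side4]
    case side3 =>
      intro l hlmem hne
      rw [MvPolynomial.coeff_monomial, if_neg]
      intro hc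
      exact hne (down_inj (hyz s₀ hs₀) (hyz s₀ hs₀)
        (odd_ne_zero (mem_oddset.mp hlmem)) (odd_ne_zero hodd) hc).2
    case side4 =>
      intro hc
      exact absurd (mem_oddset.mpr hodd) hc
    rw [MvPolynomial.coeff_monomial, if_pos rfl]
  rw [hdf] at hco
  simp only [MvPolynomial.coeff_zero] at hco
  exact (MvPolynomial.mem_support_iff.mp hs₀) hco.symm

noncomputable def half (s : Mono m) : Mono m := s.mapRange (· / 2) (by norm_num)

lemma monomial_eq_sq {s : Mono m} (hev : ∀ a, s a % 2 = 0) :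
    (monomial s (1 : k)) = (monomial (half s) (1 : k)) ^ 2 := by
  have hh : (2 : ℕ) • half s = s := by
    ext a
    rw [Finsupp.smul_apply]
    rw [show (half s) a = s a / 2 from Finsupp.mapRange_apply, smul_eq_mul]
    have := hev a
    omega
  rw [MvPolynomial.monomial_pow, one_pow, hh]

lemma mul_mem_biComponent {a b a' b' : ℕ} {f g : MvPolynomial (Idx m) k}
    (hf : f ∈ biComponent k m a b) (hg : g ∈ biComponent k m a' b') :
    f * g ∈ biComponent k m (a + a') (b + b') := by
  have h1 := Submodule.mul_mem_mul hf hg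
  unfold biComponent at h1
  rw [Submodule.span_mul_span] at h1
  refine Submodule.span_le.mpr ?_ h1
  rintro q ⟨q1, ⟨s, rfl, hs1, hs2⟩, q2, ⟨t, rfl, ht1, ht2⟩, rfl⟩
  show (monomial s (1 : k)) * monomial t 1 ∈ (biComponent k m (a + a') (b + b') : Set _)
  rw [MvPolynomial.monomial_mul, one_mul]
  apply SetLike.mem_coe.mpr
  apply monomial_mem_biComponent
  · unfold xdeg
    rw [← hs1, ← ht1, ← Finset.sum_add_distrib]
    exact Finset.sum_congr rfl (fun j _ => Finsupp.add_apply s t _)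
  · unfold ydeg
    rw [← hs2, ← ht2, ← Finset.sum_add_distrib]
    exact Finset.sum_congr rfl (fun j _ => Finsupp.add_apply s t _)

theorem stmt_7' (k : Type*) [Field k] [CharP k 2] (m n : ℕ) (hm : 1 ≤ m) (hn : 1 ≤ n) :
    (koszulD k m ∘ₗ koszulD k m = 0) ∧
    (∀ j : ℕ, j ≤ 2 * n →
      Submodule.map (koszulD k m) (biComponent k m (2 * n - j) j) ≤
        biComponent k m (2 * n - (j + 1)) (j + 1)) ∧
    (biComponent k m (2 * n) 0 ⊓ LinearMap.ker (koszulD k m) =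
      Submodule.span k
        ((fun g : MvPolynomial (Fin m ⊕ Fin m) k => g ^ 2) ''
          (biComponent k m n 0 : Set (MvPolynomial (Fin m ⊕ Fin m) k)))) ∧
    (∀ j : ℕ, 1 ≤ j → j ≤ 2 * n →
      biComponent k m (2 * n - j) j ⊓ LinearMap.ker (koszulD k m) =
        Submodule.map (koszulD k m) (biComponent k m (2 * n - (j - 1)) (j - 1))) := by
  have hmapb : ∀ a b : ℕ, Submodule.map (koszulD k m) (biComponent k m a b) ≤
      biComponent k m (a - 1) (b + 1) := by
    intro a b
    rw [show biComponent k m a b = Submodule.span k _ from rfl, Submodule.map_span]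
    refine Submodule.span_le.mpr ?_
    rintro q ⟨q', ⟨s, rfl, hs1, hs2⟩, rfl⟩
    exact koszulD_monomial_mem s 1 hs1 hs2
  refine ⟨koszulD_comp_koszulD, ?_, ?_, ?_⟩
  · -- part (b)
    intro j hj
    refine le_trans (hmapb _ _) (le_of_eq ?_)
    rw [show 2 * n - j - 1 = 2 * n - (j + 1) from by omega]
  · -- part (c)
    apply le_antisymm
    · intro f hf
      obtain ⟨hf1, hf2⟩ := Submodule.mem_inf.mp hf
      have hdeg := support_biComponent hf1
      have heven := even_exponents (fun s hs => (hdeg s hs).2) (LinearMap.mem_ker.mp hf2)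
      have hyzero : ∀ s ∈ f.support, ∀ i, s (Sum.inr i) = 0 := by
        intro s hs i
        have h := (hdeg s hs).2
        unfold ydeg at h
        exact Finset.sum_eq_zero_iff.mp h i (Finset.mem_univ i)
      rw [MvPolynomial.as_sum f]
      apply Submodule.sum_mem
      intro s hs
      have hcoords : ∀ a, s a % 2 = 0 := by
        intro a
        rcases a with i | i
        · have h := heven s hs i
          rw [Nat.odd_iff] at h
          omega
        · rw [hyzero s hs i]
      have hrw : (monomial s (MvPolynomial.coeff s f) : MvPolynomial (Idx m) k)
          = MvPolynomial.coeff s f • (monomial (half s) 1) ^ 2 := by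
        rw [← monomial_eq_sq hcoords, MvPolynomial.smul_monomial, smul_eq_mul, mul_one]
      rw [hrw]
      apply Submodule.smul_mem
      apply Submodule.subset_span
      refine ⟨monomial (half s) 1, ?_, rfl⟩
      apply SetLike.mem_coe.mpr
      apply monomial_mem_biComponent
      · have h2n := (hdeg s hs).1
        have hh : 2 * xdeg (half s) = xdeg s := by
          unfold xdeg
          rw [Finset.mul_sum]
          apply Finset.sum_congr rfl
          intro l _
          rw [show (half s) (Sum.inl l) = s (Sum.inl l) / 2 from Finsupp.mapRange_apply]
          have := hcoords (Sum.inl l)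
          omega
        omega
      · apply Finset.sum_eq_zero
        intro l _
        rw [show (half s) (Sum.inr l) = s (Sum.inr l) / 2 from Finsupp.mapRange_apply,
          hyzero s hs l]
        omega
    · refine Submodule.span_le.mpr ?_
      rintro q ⟨g, hg, rfl⟩
      rw [SetLike.mem_coe] at hg
      show g ^ 2 ∈ biComponent k m (2 * n) 0 ⊓ LinearMap.ker (koszulD k m)
      refine Submodule.mem_inf.mpr ⟨?_, ?_⟩
      · have h := mul_mem_biComponent hg hg
        rw [pow_two]
        rw [show 2 * n = n + n by omega]
        exact h
      · rw [LinearMap.mem_ker, koszulD_apply]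
        apply Finset.sum_eq_zero
        intro i _
        have h : pderiv (Sum.inl i) (g ^ 2) = 0 := by
          rw [pow_two, pderiv_mul, mul_comm]
          exact CharTwo.add_self_eq_zero _
        rw [h, mul_zero]
  · -- part (d)
    intro j hj1 hj2
    apply le_antisymm
    · intro f hf
      obtain ⟨hf1, hf2⟩ := Submodule.mem_inf.mp hf
      have hid := homotopy_on (a := 2 * n - j) (b := j) (by omega) hf1
      rw [LinearMap.mem_ker.mp hf2, map_zero, add_zero] at hid
      refine Submodule.mem_map.mpr ⟨Hmap k m f, ?_, hid⟩
      have hcm : biComponent k m (2 * n - j) j ≤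
          (biComponent k m (2 * n - (j - 1)) (j - 1)).comap (Hmap k m) := by
        refine Submodule.span_le.mpr ?_
        rintro q ⟨s, rfl, hs1, hs2⟩
        simp only [SetLike.mem_coe, Submodule.mem_comap]
        rw [Hmap_monomial, one_smul]
        have h := Hmono_mem (k := k) s hs1 hs2
        have heq : 2 * n - j + 1 = 2 * n - (j - 1) := by omega
        rwa [heq] at h
      exact hcm hf1
    · refine le_inf ?_ ?_
      · refine le_trans (hmapb _ _) (le_of_eq ?_)
        rw [show 2 * n - (j - 1) - 1 = 2 * n - j from by omega,
          show j - 1 + 1 = j from by omega]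
      · rintro q ⟨y, hy, rfl⟩
        rw [LinearMap.mem_ker, ← LinearMap.comp_apply, koszulD_comp_koszulD,
          LinearMap.zero_apply]

end Stmt7Aux

/-- over a field `k` of characteristic 2, with `R = k[x₁,…,x_m,y₁,…,y_m]`,
`d = Σᵢ yᵢ ∂/∂xᵢ`, and `Cʲ` the span of monomials of `x`-degree `2n − j` and `y`-degree
`j`: (a) `d ∘ d = 0`; (b) `d(Cʲ) ⊆ Cʲ⁺¹` for `0 ≤ j ≤ 2n`; (c) the kernel of `d`
restricted to `C⁰` is the span of the squares `g²` of homogeneous polynomials `g` of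
degree `n` in the `x` variables; (d) for `1 ≤ j ≤ 2n` the kernel of `d` restricted to
`Cʲ` equals `d(Cʲ⁻¹)`. -/
theorem stmt_7 (k : Type*) [Field k] [CharP k 2] (m n : ℕ) (hm : 1 ≤ m) (hn : 1 ≤ n) :
    (koszulD k m ∘ₗ koszulD k m = 0) ∧
    (∀ j : ℕ, j ≤ 2 * n →
      Submodule.map (koszulD k m) (biComponent k m (2 * n - j) j) ≤
        biComponent k m (2 * n - (j + 1)) (j + 1)) ∧
    (biComponent k m (2 * n) 0 ⊓ LinearMap.ker (koszulD k m) =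
      Submodule.span k
        ((fun g : MvPolynomial (Fin m ⊕ Fin m) k => g ^ 2) ''
          (biComponent k m n 0 : Set (MvPolynomial (Fin m ⊕ Fin m) k)))) ∧
    (∀ j : ℕ, 1 ≤ j → j ≤ 2 * n →
      biComponent k m (2 * n - j) j ⊓ LinearMap.ker (koszulD k m) =
        Submodule.map (koszulD k m) (biComponent k m (2 * n - (j - 1)) (j - 1))) :=
  Stmt7Aux.stmt_7' k m n hm hn
end

section
/- Let A be an abelian category and let C, D, E be ℤ-indexed cochain complexes in A. Let f : C → D be a quasi-isomorphism such that each component fⁿ : Cⁿ → Dⁿ is a monomorphism, and let g : C → E be an arbitrary cochain map. Let F be the cokernel of the cochain map (f, −g) : C → D ⊕ E. Then the canonical cochain map E → F (the composite of the inclusion E → D ⊕ E with the quotient map) is a quasi-isomorphism, and each of its components is a monomorphism. -/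
open CategoryTheory CategoryTheory.Limits

section Aux

variable {B : Type*} [Category B] [Abelian B] {X Y Z : B} (a : X ⟶ Y) (b : X ⟶ Z)

lemma aux_mono_lift [Mono a] : Mono (biprod.lift a (-b)) := by
  have : Mono (biprod.lift a (-b) ≫ biprod.fst) := by
    rw [biprod.lift_fst]; infer_instance
  exact mono_of_mono _ biprod.fst

lemma aux_comp_zero :
    biprod.lift a (-b) ≫ biprod.desc (cokernel.π a) (0 : Z ⟶ cokernel a) = 0 := by
  simp

lemma aux_shortExact [Mono a] :
    (ShortComplex.mk (biprod.inr ≫ cokernel.π (biprod.lift a (-b)))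
      (cokernel.desc _ (biprod.desc (cokernel.π a) 0) (aux_comp_zero a b))
      (by rw [Category.assoc, cokernel.π_desc, biprod.inr_desc])).ShortExact := by
  have hmono : Mono (biprod.lift a (-b)) := aux_mono_lift a b
  -- the short exact sequence X ⟶ Y ⊞ Z ⟶ cokernel (biprod.lift a (-b))
  have hS₀ : (ShortComplex.mk (biprod.lift a (-b)) (cokernel.π (biprod.lift a (-b)))
      (cokernel.condition _)).ShortExact :=
    { exact := ShortComplex.exact_of_g_is_cokernel _ (cokernelIsCokernel _)
      mono_f := hmono
      epi_g := inferInstance }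
  -- the short exact sequence X ⟶ Y ⟶ cokernel a
  have hS₁ : (ShortComplex.mk a (cokernel.π a) (cokernel.condition a)).ShortExact :=
    { exact := ShortComplex.exact_of_g_is_cokernel _ (cokernelIsCokernel a)
      mono_f := inferInstance
      epi_g := inferInstance }
  -- key identity
  have hkey : a ≫ (biprod.inl : Y ⟶ Y ⊞ Z) ≫ cokernel.π (biprod.lift a (-b)) =
      b ≫ (biprod.inr : Z ⟶ Y ⊞ Z) ≫ cokernel.π (biprod.lift a (-b)) := by
    have h1 : (a ≫ biprod.inl + (-b) ≫ biprod.inr) ≫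
        cokernel.π (biprod.lift a (-b)) = 0 := by
      rw [← biprod.lift_eq]
      exact cokernel.condition _
    rw [Preadditive.add_comp, Preadditive.neg_comp, Preadditive.neg_comp,
      ← sub_eq_add_neg, sub_eq_zero, Category.assoc, Category.assoc] at h1
    exact h1
  have hmonof : Mono (biprod.inr ≫ cokernel.π (biprod.lift a (-b)) :
      Z ⟶ cokernel (biprod.lift a (-b))) := by
    apply Preadditive.mono_of_cancel_zero
    intro P k hk
    have hk' : (k ≫ biprod.inr) ≫ cokernel.π (biprod.lift a (-b)) = 0 := by
      simpa only [Category.assoc] using hk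
    obtain ⟨w, hw⟩ := KernelFork.IsLimit.lift' hS₀.fIsKernel (k ≫ biprod.inr) hk'
    have hw0 : w = 0 := by
      have : w ≫ a = 0 := by
        have := hw =≫ biprod.fst
        simpa using this
      exact zero_of_comp_mono a this
    have hki : k ≫ (biprod.inr : Z ⟶ Y ⊞ Z) = 0 := by rw [← hw, hw0, zero_comp]
    calc k = (k ≫ (biprod.inr : Z ⟶ Y ⊞ Z)) ≫ biprod.snd := by simp
    _ = 0 := by rw [hki, zero_comp]
  have hepig : Epi (cokernel.desc (biprod.lift a (-b)) (biprod.desc (cokernel.π a) 0)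
      (aux_comp_zero a b)) := by
    apply Preadditive.epi_of_cancel_zero
    intro R t ht
    have : cokernel.π a ≫ t = 0 := by
      have h1 := cokernel.π (biprod.lift a (-b)) ≫= ht
      rw [cokernel.π_desc_assoc, comp_zero] at h1
      have := biprod.inl ≫= h1
      simpa using this
    exact zero_of_epi_comp (cokernel.π a) this
  have hexact : (ShortComplex.mk (biprod.inr ≫ cokernel.π (biprod.lift a (-b)))
      (cokernel.desc _ (biprod.desc (cokernel.π a) 0) (aux_comp_zero a b))
      (by rw [Category.assoc, cokernel.π_desc, biprod.inr_desc])).Exact := by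
    rw [ShortComplex.exact_iff_exact_up_to_refinements]
    intro T y hy
    dsimp at y hy ⊢
    obtain ⟨T₁, p₁, hp₁, w, fac₁⟩ :=
      surjective_up_to_refinements_of_epi (cokernel.π (biprod.lift a (-b))) y
    have h2 : (w ≫ biprod.fst) ≫ cokernel.π a = 0 := by
      have h1 : w ≫ cokernel.π (biprod.lift a (-b)) ≫
          cokernel.desc _ (biprod.desc (cokernel.π a) 0) (aux_comp_zero a b) = 0 := by
        rw [← Category.assoc, ← fac₁, Category.assoc, hy, comp_zero]
      rw [cokernel.π_desc] at h1
      rw [Category.assoc]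
      simpa [biprod.desc_eq] using h1
    obtain ⟨T₂, p₂, hp₂, x, fac₂⟩ := hS₁.exact.exact_up_to_refinements (w ≫ biprod.fst) h2
    dsimp at x fac₂
    refine ⟨T₂, p₂ ≫ p₁, epi_comp _ _, p₂ ≫ w ≫ biprod.snd + x ≫ b, ?_⟩
    have htot : w ≫ cokernel.π (biprod.lift a (-b)) =
        w ≫ (biprod.fst ≫ biprod.inl + biprod.snd ≫ biprod.inr) ≫
          cokernel.π (biprod.lift a (-b)) := by
      rw [biprod.total, Category.id_comp]
    calc (p₂ ≫ p₁) ≫ y = p₂ ≫ (p₁ ≫ y) := by rw [Category.assoc]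
      _ = p₂ ≫ w ≫ cokernel.π (biprod.lift a (-b)) := by rw [fac₁]
      _ = p₂ ≫ w ≫ (biprod.fst ≫ biprod.inl + biprod.snd ≫ biprod.inr) ≫
          cokernel.π (biprod.lift a (-b)) := by rw [← htot]
      _ = (p₂ ≫ w ≫ biprod.fst) ≫ biprod.inl ≫ cokernel.π (biprod.lift a (-b)) +
          (p₂ ≫ w ≫ biprod.snd) ≫ biprod.inr ≫ cokernel.π (biprod.lift a (-b)) := by
          simp only [Preadditive.add_comp, Preadditive.comp_add, Category.assoc]
      _ = (x ≫ a) ≫ biprod.inl ≫ cokernel.π (biprod.lift a (-b)) +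
          (p₂ ≫ w ≫ biprod.snd) ≫ biprod.inr ≫ cokernel.π (biprod.lift a (-b)) := by
          rw [fac₂]
      _ = (p₂ ≫ w ≫ biprod.snd + x ≫ b) ≫ biprod.inr ≫
          cokernel.π (biprod.lift a (-b)) := by
          simp only [Preadditive.add_comp, Category.assoc, hkey]
          rw [add_comm]
  exact { exact := hexact, mono_f := hmonof, epi_g := hepig }

end Aux

/-- Let `A` be an abelian category, `f : C ⟶ D` a quasi-isomorphism of
cochain complexes with monomorphism components, and `g : C ⟶ E` any cochain map. Let `F`
be the cokernel of `(f, -g) : C ⟶ D ⊞ E`. Then the canonical map `E ⟶ F` is a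
quasi-isomorphism with monomorphism components (the base change diagram). -/
theorem stmt_8 {A : Type*} [Category A] [Abelian A]
    (C D E : CochainComplex A ℤ)
    (f : C ⟶ D) (g : C ⟶ E)
    [QuasiIso f] (hf : ∀ n : ℤ, Mono (f.f n)) :
    QuasiIso (biprod.inr ≫ cokernel.π (biprod.lift f (-g)) :
        E ⟶ cokernel (biprod.lift f (-g))) ∧
    ∀ n : ℤ, Mono ((biprod.inr ≫ cokernel.π (biprod.lift f (-g)) :
        E ⟶ cokernel (biprod.lift f (-g))).f n) := by
  haveI : Mono f := HomologicalComplex.mono_of_mono_f f hf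
  have hS₂ := aux_shortExact f g
  haveI hu : Mono (biprod.inr ≫ cokernel.π (biprod.lift f (-g)) :
      E ⟶ cokernel (biprod.lift f (-g))) := hS₂.mono_f
  -- the short exact sequence C ⟶ D ⟶ cokernel f
  have hS₁ : (ShortComplex.mk f (cokernel.π f) (cokernel.condition f)).ShortExact :=
    { exact := ShortComplex.exact_of_g_is_cokernel _ (cokernelIsCokernel f)
      mono_f := inferInstance
      epi_g := inferInstance }
  -- homology of cokernel f vanishes
  have hQ : ∀ i : ℤ, IsZero (HomologicalComplex.homology (cokernel f) i) := by
    intro i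
    have hrel : (ComplexShape.up ℤ).Rel i (i + 1) := rfl
    have e3 := hS₁.homology_exact₃ i (i + 1) hrel
    have e1 := hS₁.homology_exact₁ i (i + 1) hrel
    haveI : IsIso (HomologicalComplex.homologyMap f i) := by
      rw [← quasiIsoAt_iff_isIso_homologyMap]; infer_instance
    haveI : IsIso (HomologicalComplex.homologyMap f (i + 1)) := by
      rw [← quasiIsoAt_iff_isIso_homologyMap]; infer_instance
    have hπ0 : HomologicalComplex.homologyMap (cokernel.π f) i = 0 := by
      apply zero_of_epi_comp (HomologicalComplex.homologyMap f i)
      rw [← HomologicalComplex.homologyMap_comp, cokernel.condition,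
        HomologicalComplex.homologyMap_zero]
    haveI hδmono : Mono (hS₁.δ i (i + 1) hrel) := e3.mono_g hπ0
    have hδ0 : hS₁.δ i (i + 1) hrel = 0 := by
      apply zero_of_comp_mono (HomologicalComplex.homologyMap f (i + 1))
      exact hS₁.δ_comp i (i + 1) hrel
    rw [IsZero.iff_id_eq_zero, ← cancel_mono (hS₁.δ i (i + 1) hrel), hδ0]
    simp
  constructor
  · rw [quasiIso_iff]
    intro i
    rw [quasiIsoAt_iff_isIso_homologyMap]
    have hrel : (ComplexShape.up ℤ).Rel (i - 1) i := show i - 1 + 1 = i by omega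
    have e1 := hS₂.homology_exact₁ (i - 1) i hrel
    have e2 := hS₂.homology_exact₂ i
    haveI : Mono (HomologicalComplex.homologyMap
        (biprod.inr ≫ cokernel.π (biprod.lift f (-g)) :
          E ⟶ cokernel (biprod.lift f (-g))) i) :=
      e1.mono_g ((hQ (i - 1)).eq_of_src _ _)
    haveI : Epi (HomologicalComplex.homologyMap
        (biprod.inr ≫ cokernel.π (biprod.lift f (-g)) :
          E ⟶ cokernel (biprod.lift f (-g))) i) :=
      e2.epi_f ((hQ i).eq_of_tgt _ _)
    exact isIso_of_mono_of_epi _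
  · intro n
    infer_instance
end

section
/- Let A be an abelian category, let J and C be bounded below ℤ-indexed cochain complexes in A with every object Jⁱ injective, and let f : J → C be a quasi-isomorphism. Then there exists a cochain map g : C → J such that g ∘ f is homotopic to the identity of J; that is, f is a split monomorphism in the homotopy category of bounded below cochain complexes. -/
open CategoryTheory CategoryTheory.Limits

namespace Stmt9Aux

variable {A : Type*} [Category A] [Abelian A]

section NullHomotopy

variable (X J : CochainComplex A ℤ) (φ : X ⟶ J)

/-- Partial homotopy data at level `ℓ`: a map `X (ℓ+1) ⟶ J ℓ` together with the
invariant needed to continue the construction. -/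
abbrev HAux (ℓ : ℤ) : Type _ :=
  { a : X.X (ℓ + 1) ⟶ J.X ℓ //
    X.d ℓ (ℓ + 1) ≫ (φ.f (ℓ + 1) - a ≫ J.d ℓ (ℓ + 1)) = 0 }

variable {X J}
variable (hX : ∀ n, X.ExactAt n) (hJinj : ∀ i : ℤ, Injective (J.X i))

/-- One step of the inductive construction of the null homotopy. -/
noncomputable def stepAux (φ : X ⟶ J) (ℓ m : ℤ) (h : ℓ + 1 = m) (x : HAux X J φ ℓ) :
    { y : HAux X J φ m //
      φ.f m = X.d m (m + 1) ≫ y.1 +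
        (eqToHom (show X.X m = X.X (ℓ + 1) by rw [h]) ≫ x.1) ≫ J.d ℓ m } := by
  subst h
  have hS : (X.sc' ℓ (ℓ + 1) (ℓ + 1 + 1)).Exact := by
    refine (X.exactAt_iff' ℓ (ℓ + 1) (ℓ + 1 + 1) ?_ ?_).mp (hX (ℓ + 1))
    · rw [CochainComplex.prev]; omega
    · rw [CochainComplex.next]
  haveI := hJinj (ℓ + 1)
  set ψ : X.X (ℓ + 1) ⟶ J.X (ℓ + 1) := φ.f (ℓ + 1) - x.1 ≫ J.d ℓ (ℓ + 1) with hψ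
  have hf : (X.sc' ℓ (ℓ + 1) (ℓ + 1 + 1)).f ≫ ψ = 0 := x.2
  set b : X.X (ℓ + 1 + 1) ⟶ J.X (ℓ + 1) := hS.descToInjective ψ hf with hb
  have hb' : X.d (ℓ + 1) (ℓ + 1 + 1) ≫ b = ψ := hS.comp_descToInjective ψ hf
  refine ⟨⟨b, ?_⟩, ?_⟩
  · rw [Preadditive.comp_sub, ← Category.assoc, hb', hψ]
    simp [Preadditive.sub_comp, φ.comm]
  · show φ.f (ℓ + 1) = X.d (ℓ + 1) (ℓ + 1 + 1) ≫ b + _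
    rw [hb', hψ, eqToHom_refl, Category.id_comp]
    abel

variable (N : ℤ) (hJ0 : ∀ i < N, IsZero (J.X i))

/-- The inductively constructed homotopy components. -/
noncomputable def hAux (φ : X ⟶ J) (ℓ : ℤ) : HAux X J φ ℓ :=
  if hℓ : ℓ < N then
    ⟨0, by
      have h0 : φ.f ℓ = 0 := (hJ0 ℓ hℓ).eq_of_tgt _ _
      rw [zero_comp, sub_zero, ← φ.comm ℓ (ℓ + 1), h0, zero_comp]⟩
  else
    (stepAux hX hJinj φ (ℓ - 1) ℓ (by omega) (hAux φ (ℓ - 1))).1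
termination_by (ℓ + 1 - N).toNat
decreasing_by
  simp_wf
  omega

lemma hAux_comm (φ : X ⟶ J) (n : ℤ) (hn : ¬ n < N) :
    φ.f n = X.d n (n + 1) ≫ (hAux hX hJinj N hJ0 φ n).1 +
      (eqToHom (show X.X n = X.X ((n - 1) + 1) by congr 1; omega) ≫
        (hAux hX hJinj N hJ0 φ (n - 1)).1) ≫ J.d (n - 1) n := by
  have h : hAux hX hJinj N hJ0 φ n =
      (stepAux hX hJinj φ (n - 1) n (by omega) (hAux hX hJinj N hJ0 φ (n - 1))).1 := by
    conv_lhs => rw [hAux]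
    rw [dif_neg hn]
  rw [h]
  exact (stepAux hX hJinj φ (n - 1) n (by omega) (hAux hX hJinj N hJ0 φ (n - 1))).2

/-- A cochain map from an exact complex to a bounded below complex of injectives
is null-homotopic. -/
theorem exists_nullHomotopy (X J : CochainComplex A ℤ) (N : ℤ)
    (hX : ∀ n, X.ExactAt n) (hJ0 : ∀ i < N, IsZero (J.X i))
    (hJinj : ∀ i : ℤ, Injective (J.X i)) (φ : X ⟶ J) :
    Nonempty (Homotopy φ 0) := by
  let hom : ∀ i j, X.X i ⟶ J.X j := fun i j =>
    if h : j + 1 = i then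
      eqToHom (show X.X i = X.X (j + 1) by rw [h]) ≫ (hAux hX hJinj N hJ0 φ j).1
    else 0
  refine ⟨⟨hom, fun i j hij => dif_neg (by simpa using hij), fun n => ?_⟩⟩
  show φ.f n = dNext n hom + prevD n hom + (0 : X ⟶ J).f n
  by_cases hn : n < N
  · exact (hJ0 n hn).eq_of_tgt _ _
  · rw [dNext_eq _ (show (ComplexShape.up ℤ).Rel n (n + 1) by simp),
      prevD_eq _ (show (ComplexShape.up ℤ).Rel (n - 1) n by simp)]
    simp only [hom, HomologicalComplex.zero_f_apply, add_zero]
    rw [dif_pos trivial, dif_pos (show n - 1 + 1 = n by omega), eqToHom_refl, Category.id_comp]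
    exact hAux_comm hX hJinj N hJ0 φ n hn

end NullHomotopy

/-- Any morphism in the homotopy category from an acyclic object to a bounded below
complex of injectives vanishes. -/
lemma hom_eq_zero_of_acyclic (J : CochainComplex A ℤ) (N : ℤ)
    (hJ0 : ∀ i < N, IsZero (J.X i)) (hJinj : ∀ i : ℤ, Injective (J.X i))
    (P : HomotopyCategory A (ComplexShape.up ℤ))
    (hP : HomotopyCategory.subcategoryAcyclic A P)
    (u : P ⟶ (HomotopyCategory.quotient A (ComplexShape.up ℤ)).obj J) : u = 0 := by
  obtain ⟨K⟩ := P
  have hK : ∀ n : ℤ, K.ExactAt n :=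
    (HomotopyCategory.quotient_obj_mem_subcategoryAcyclic_iff_exactAt K).mp hP
  obtain ⟨u₀, rfl⟩ := (HomotopyCategory.quotient A (ComplexShape.up ℤ)).map_surjective u
  obtain ⟨h⟩ := exists_nullHomotopy K J N hK hJ0 hJinj u₀
  rw [HomotopyCategory.eq_of_homotopy u₀ 0 h, Functor.map_zero]
  rfl

end Stmt9Aux

/-- Let `A` be an abelian category, `J` and `C` bounded below cochain
complexes with every `J i` injective, and `f : J ⟶ C` a quasi-isomorphism. Then there is
a cochain map `g : C ⟶ J` with `f ≫ g` homotopic to the identity of `J`; that is, `f` is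
a split monomorphism in the homotopy category of bounded below complexes. -/
theorem stmt_9 {A : Type*} [Category A] [Abelian A]
    (J C : CochainComplex A ℤ)
    (hJbdd : ∃ N : ℤ, ∀ i < N, IsZero (J.X i))
    (hCbdd : ∃ N : ℤ, ∀ i < N, IsZero (C.X i))
    (hJinj : ∀ i : ℤ, Injective (J.X i))
    (f : J ⟶ C) [QuasiIso f] :
    ∃ g : C ⟶ J, Nonempty (Homotopy (f ≫ g) (𝟙 J)) := by
  obtain ⟨N, hJ0⟩ := hJbdd
  let Q := HomotopyCategory.quotient A (ComplexShape.up ℤ)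
  -- the mapping cone triangle is distinguished
  have hT := HomotopyCategory.mappingCone_triangleh_distinguished f
  set T := CochainComplex.mappingCone.triangleh f with hTdef
  -- the quotient map of f is in the W of the acyclic subcategory
  have hW : (HomotopyCategory.subcategoryAcyclic A).trW T.mor₁ := by
    rw [← HomotopyCategory.quasiIso_eq_trW_subcategoryAcyclic]
    show HomotopyCategory.quasiIso A (ComplexShape.up ℤ) (Q.map f)
    rw [HomotopyCategory.quotient_map_mem_quasiIso_iff,
      HomologicalComplex.mem_quasiIso_iff]
    infer_instance
  have hmem : HomotopyCategory.subcategoryAcyclic A T.obj₃ :=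
    ((HomotopyCategory.subcategoryAcyclic A).trW_iff_of_distinguished T hT).mp hW
  -- the inverse rotation of the triangle
  have hT' := Pretriangulated.inv_rot_of_distTriang T hT
  have hmem₁ : HomotopyCategory.subcategoryAcyclic A T.invRotate.obj₁ :=
    (HomotopyCategory.subcategoryAcyclic A).le_shift (-1) T.obj₃ hmem
  have h0 : T.invRotate.mor₁ = 0 :=
    Stmt9Aux.hom_eq_zero_of_acyclic J N hJ0 hJinj _ hmem₁ T.invRotate.mor₁
  obtain ⟨g', hg'⟩ := Pretriangulated.Triangle.yoneda_exact₂ T.invRotate hT'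
    (𝟙 (Q.obj J)) (by rw [h0]; exact zero_comp)
  obtain ⟨g, rfl⟩ := Q.map_surjective (X := C) (Y := J) g'
  have : Q.map (f ≫ g) = Q.map (𝟙 J) := by
    rw [Q.map_comp, Q.map_id]
    exact hg'.symm
  exact ⟨g, ⟨HomotopyCategory.homotopyOfEq _ _ this⟩⟩
end

section
/- Let A be an abelian category, let J and J̃ be bounded below ℤ-indexed cochain complexes in A with every object Jⁱ and J̃ⁱ injective, and let f : J → J̃ be a cochain map. Suppose there is a bounded below complex C and a quasi-isomorphism g : C → J with every component gⁿ a monomorphism, such that f ∘ g = 0. Then f is null-homotopic. -/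
open CategoryTheory CategoryTheory.Limits


section Aux
variable {A : Type*} [Category A] [Abelian A]

lemma my_d_comp_XIsoOfEq_hom (K : CochainComplex A ℤ) {i j j' : ℤ} (h : j = j') :
    K.d i j ≫ (K.XIsoOfEq h).hom = K.d i j' := by
  subst h; simp [HomologicalComplex.XIsoOfEq]

lemma my_XIsoOfEq_hom_comp_d (K : CochainComplex A ℤ) {i i' j : ℤ} (h : i = i') :
    (K.XIsoOfEq h).hom ≫ K.d i' j = K.d i j := by
  subst h; simp [HomologicalComplex.XIsoOfEq]

variable (Q J' : CochainComplex A ℤ) (fQ : Q ⟶ J')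

/-- One step of homotopy data: the maps in degree `n` and `n+1` together with the
homotopy identity in degree `n`. -/
def HomotopyStep (n : ℤ) : Type _ :=
  Σ' (a : Q.X n ⟶ J'.X (n - 1)) (b : Q.X (n + 1) ⟶ J'.X n),
    fQ.f n = Q.d n (n + 1) ≫ b + a ≫ J'.d (n - 1) n

noncomputable def homotopyStepSucc (hex : ∀ n : ℤ, Q.ExactAt n)
    (hinj : ∀ i : ℤ, Injective (J'.X i)) (n : ℤ)
    (s : HomotopyStep Q J' fQ (n - 1)) : HomotopyStep Q J' fQ n := by
  letI : Injective (J'.X n) := hinj n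
  have hex' : (Q.sc' (n - 1) n (n + 1)).Exact := by
    rw [← HomologicalComplex.exactAt_iff' Q (n - 1) n (n + 1)
      (by simp [CochainComplex.prev]) (by simp [CochainComplex.next])]
    exact hex n
  set a' : Q.X n ⟶ J'.X (n - 1) := (Q.XIsoOfEq (by omega : n = n - 1 + 1)).hom ≫ s.2.1
    with ha'
  set φ : Q.X n ⟶ J'.X n := fQ.f n - a' ≫ J'.d (n - 1) n with hφdef
  have hφ : (Q.sc' (n - 1) n (n + 1)).f ≫ φ = 0 := by
    show Q.d (n - 1) n ≫ φ = 0
    have h1 : Q.d (n - 1) n ≫ a' = Q.d (n - 1) (n - 1 + 1) ≫ s.2.1 := by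
      rw [ha', ← Category.assoc, my_d_comp_XIsoOfEq_hom]
    have h2 := s.2.2
    have h3 := fQ.comm (n - 1) n
    rw [hφdef, Preadditive.comp_sub, ← Category.assoc, h1, Category.assoc,
      ← h3]
    have h5 : fQ.f (n - 1) ≫ J'.d (n - 1) n
        = Q.d (n - 1) (n - 1 + 1) ≫ s.2.1 ≫ J'.d (n - 1) n := by
      simp only [h2]; simp [Preadditive.add_comp, Category.assoc]
    rw [h5]; simp
  refine ⟨a', hex'.descToInjective φ hφ, ?_⟩
  have h4 : Q.d n (n + 1) ≫ hex'.descToInjective φ hφ = φ :=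
    hex'.comp_descToInjective φ hφ
  rw [h4, hφdef]
  abel

noncomputable def homotopySeq (hex : ∀ n : ℤ, Q.ExactAt n)
    (hinj : ∀ i : ℤ, Injective (J'.X i)) (N : ℤ) (hQ : ∀ i < N, IsZero (Q.X i)) :
    (n : ℤ) → HomotopyStep Q J' fQ n
  | n =>
    if h : n < N then
      ⟨0, 0, by apply (hQ n h).eq_of_src⟩
    else
      homotopyStepSucc Q J' fQ hex hinj n (homotopySeq hex hinj N hQ (n - 1))
  termination_by n => (n + 1 - N).toNat
  decreasing_by omega

lemma homotopySeq_fst (hex : ∀ n : ℤ, Q.ExactAt n)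
    (hinj : ∀ i : ℤ, Injective (J'.X i)) (N : ℤ) (hQ : ∀ i < N, IsZero (Q.X i))
    (n : ℤ) (hn : ¬ n < N) :
    (homotopySeq Q J' fQ hex hinj N hQ n).1 =
      (Q.XIsoOfEq (by omega : n = n - 1 + 1)).hom ≫
        (homotopySeq Q J' fQ hex hinj N hQ (n - 1)).2.1 := by
  rw [homotopySeq]
  exact congrArg PSigma.fst (dif_neg hn : _ = homotopyStepSucc Q J' fQ hex hinj n (homotopySeq Q J' fQ hex hinj N hQ (n - 1)))

lemma homotopySeq_congr (hex : ∀ n : ℤ, Q.ExactAt n)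
    (hinj : ∀ i : ℤ, Injective (J'.X i)) (N : ℤ) (hQ : ∀ i < N, IsZero (Q.X i))
    {m n : ℤ} (e : m = n) :
    (homotopySeq Q J' fQ hex hinj N hQ m).2.1 =
      (Q.XIsoOfEq (by rw [e] : m + 1 = n + 1)).hom ≫
        (homotopySeq Q J' fQ hex hinj N hQ n).2.1 ≫ (J'.XIsoOfEq e.symm).hom := by
  subst e
  simp [HomologicalComplex.XIsoOfEq]

lemma homotopySeq_key (hex : ∀ n : ℤ, Q.ExactAt n)
    (hinj : ∀ i : ℤ, Injective (J'.X i)) (N : ℤ) (hQ : ∀ i < N, IsZero (Q.X i))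
    (i : ℤ) :
    (homotopySeq Q J' fQ hex hinj N hQ (i + 1)).1 ≫
        (J'.XIsoOfEq (by omega : i + 1 - 1 = i)).hom
      = (homotopySeq Q J' fQ hex hinj N hQ i).2.1 := by
  by_cases h : i + 1 < N
  · exact (hQ (i + 1) h).eq_of_src _ _
  · rw [homotopySeq_fst Q J' fQ hex hinj N hQ (i + 1) h,
      homotopySeq_congr Q J' fQ hex hinj N hQ (by omega : i + 1 - 1 = i)]
    simp [HomologicalComplex.XIsoOfEq]

noncomputable def homotopyOfAcyclic (hex : ∀ n : ℤ, Q.ExactAt n)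
    (hinj : ∀ i : ℤ, Injective (J'.X i)) (N : ℤ) (hQ : ∀ i < N, IsZero (Q.X i)) :
    Homotopy fQ 0 where
  hom i j :=
    if e : i - 1 = j then
      (homotopySeq Q J' fQ hex hinj N hQ i).1 ≫ (J'.XIsoOfEq e).hom
    else 0
  zero i j hij := dif_neg (by simp only [ComplexShape.up_Rel] at hij; omega)
  comm i := by
    rw [dNext_eq _ (show (ComplexShape.up ℤ).Rel i (i + 1) by simp),
      prevD_eq _ (show (ComplexShape.up ℤ).Rel (i - 1) i by simp)]
    rw [dif_pos (show i + 1 - 1 = i by omega), dif_pos rfl]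
    rw [homotopySeq_key Q J' fQ hex hinj N hQ i]
    have rel := (homotopySeq Q J' fQ hex hinj N hQ i).2.2
    rw [HomologicalComplex.zero_f, add_zero]
    simpa [HomologicalComplex.XIsoOfEq] using rel
end Aux

/-- Let `A` be an abelian category, `J` and `J̃` bounded below cochain
complexes of injectives, and `f : J ⟶ J̃` a cochain map. If there is a bounded below
complex `C` and a quasi-isomorphism `g : C ⟶ J` with all components mono such that
`g ≫ f = 0`, then `f` is null-homotopic. -/
theorem stmt_11 {A : Type*} [Category A] [Abelian A]
    (J J' : CochainComplex A ℤ)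
    (hJbdd : ∃ N : ℤ, ∀ i < N, IsZero (J.X i))
    (hJ'bdd : ∃ N : ℤ, ∀ i < N, IsZero (J'.X i))
    (hJinj : ∀ i : ℤ, Injective (J.X i))
    (hJ'inj : ∀ i : ℤ, Injective (J'.X i))
    (f : J ⟶ J')
    (C : CochainComplex A ℤ)
    (hCbdd : ∃ N : ℤ, ∀ i < N, IsZero (C.X i))
    (g : C ⟶ J) [QuasiIso g]
    (hmono : ∀ n : ℤ, Mono (g.f n))
    (hgf : g ≫ f = 0) :
    Nonempty (Homotopy f 0) := by
  obtain ⟨N, hN⟩ := hJbdd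
  have hmonoG : Mono g := HomologicalComplex.mono_of_mono_f g hmono
  set Q : CochainComplex A ℤ := cokernel g with hQdef
  set π : J ⟶ Q := cokernel.π g with hπdef
  set fQ : Q ⟶ J' := cokernel.desc g f hgf with hfQdef
  set S : ShortComplex (CochainComplex A ℤ) :=
    ShortComplex.mk g π (cokernel.condition g) with hSdef
  have hS : S.ShortExact :=
    { exact := S.exact_of_g_is_cokernel (cokernelIsCokernel g)
      mono_f := hmonoG
      epi_g := by show Epi (cokernel.π g); infer_instance }
  have hQbdd : ∀ i < N, IsZero (Q.X i) := by
    intro i hi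
    have : Epi (π.f i) := inferInstance
    rw [IsZero.iff_id_eq_zero, ← cancel_epi (π.f i)]
    exact (hN i hi).eq_of_src _ _
  have hex : ∀ n : ℤ, Q.ExactAt n := by
    intro n
    have hrel : (ComplexShape.up ℤ).Rel n (n + 1) := by simp
    have e3 := hS.homology_exact₃ n (n + 1) hrel
    have i1 : IsIso (HomologicalComplex.homologyMap g n) := by
      rw [← quasiIsoAt_iff_isIso_homologyMap]; infer_instance
    have i2 : IsIso (HomologicalComplex.homologyMap g (n + 1)) := by
      rw [← quasiIsoAt_iff_isIso_homologyMap]; infer_instance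
    have hπ0 : HomologicalComplex.homologyMap π n = 0 := by
      rw [← cancel_epi (HomologicalComplex.homologyMap g n), comp_zero,
        ← HomologicalComplex.homologyMap_comp,
        show g ≫ π = 0 from cokernel.condition g,
        HomologicalComplex.homologyMap_zero]
    have hmδ : Mono (hS.δ n (n + 1) hrel) := e3.mono_g hπ0
    have hδ0 : hS.δ n (n + 1) hrel = 0 := by
      rw [← cancel_mono (HomologicalComplex.homologyMap g (n + 1)), zero_comp]
      exact hS.δ_comp n (n + 1) hrel
    rw [HomologicalComplex.exactAt_iff_isZero_homology, IsZero.iff_id_eq_zero,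
      ← cancel_mono (hS.δ n (n + 1) hrel), hδ0, comp_zero, comp_zero]
  have hfact : f = π ≫ fQ := (cokernel.π_desc g f hgf).symm
  refine ⟨(Homotopy.ofEq hfact).trans ((((homotopyOfAcyclic Q J' fQ hex hJ'inj N
    hQbdd).compLeft π).trans (Homotopy.ofEq (comp_zero))))⟩
end

section
/- Let A be an abelian category and m ∈ ℤ. Let C be a bounded below ℤ-indexed cochain complex in A with Hⁱ(C) = 0 for all i < m, and let ι : D → C be a cochain map with every component a monomorphism such that Hⁱ(D) = 0 for all i ≠ m and Hᵐ(ι) : Hᵐ(D) → Hᵐ(C) is an isomorphism. Let J be a cochain complex with Hⁱ(J) = 0 for all i ≠ m, and let f : C → J be a cochain map such that f ∘ ι : D → J is a quasi-isomorphism. Let π : C → C/D be the quotient map onto the degreewise cokernel of ι. Then the cochain map (f, π) : C → J ⊕ (C/D) is a quasi-isomorphism. -/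
open CategoryTheory CategoryTheory.Limits

lemma aux_isIso_of_isZero {A : Type*} [Category A] [Abelian A] {X Y : A}
    (hX : IsZero X) (hY : IsZero Y) (f : X ⟶ Y) : IsIso f :=
  ⟨0, hX.eq_of_src _ _, hY.eq_of_src _ _⟩

lemma aux_isIso_biprod_lift_left {A : Type*} [Category A] [Abelian A] {X Y Z : A}
    (u : X ⟶ Y) (v : X ⟶ Z) [IsIso u] (hZ : IsZero Z) : IsIso (biprod.lift u v) := by
  refine ⟨biprod.fst ≫ inv u, by simp, ?_⟩
  ext
  all_goals simp
  all_goals apply hZ.eq_of_tgt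

lemma aux_isIso_biprod_lift_right {A : Type*} [Category A] [Abelian A] {X Y Z : A}
    (u : X ⟶ Y) (v : X ⟶ Z) [IsIso v] (hY : IsZero Y) : IsIso (biprod.lift u v) := by
  refine ⟨biprod.snd ≫ inv v, by simp, ?_⟩
  ext
  all_goals simp
  all_goals apply hY.eq_of_tgt

/-- Let `A` be an abelian category, `m ∈ ℤ`, `C` a bounded below cochain
complex with `Hⁱ(C) = 0` for `i < m`, and `ι : D ⟶ C` a degreewise monomorphism with
`Hⁱ(D) = 0` for `i ≠ m` and `Hᵐ(ι)` an isomorphism. Let `J` be a complex with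
`Hⁱ(J) = 0` for `i ≠ m` and `f : C ⟶ J` a cochain map such that `ι ≫ f` is a
quasi-isomorphism. Then the map `(f, π) : C ⟶ J ⊞ (C/D)`, where `π : C ⟶ C/D` is the
quotient map onto the degreewise cokernel of `ι`, is a quasi-isomorphism. -/
theorem stmt_17 {A : Type*} [Category A] [Abelian A] (m : ℤ)
    (C D J : CochainComplex A ℤ)
    (hCbdd : ∃ N : ℤ, ∀ i < N, IsZero (C.X i))
    (hC : ∀ i < m, IsZero (C.homology i))
    (ι : D ⟶ C) (hιmono : ∀ n : ℤ, Mono (ι.f n))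
    (hD : ∀ i : ℤ, i ≠ m → IsZero (D.homology i))
    (hιm : IsIso (HomologicalComplex.homologyMap ι m))
    (hJ : ∀ i : ℤ, i ≠ m → IsZero (J.homology i))
    (f : C ⟶ J) [QuasiIso (ι ≫ f)] :
    QuasiIso (biprod.lift f (cokernel.π ι) : C ⟶ J ⊞ cokernel ι) := by
  have hmono : Mono ι := HomologicalComplex.mono_of_mono_f ι hιmono
  set S : ShortComplex (CochainComplex A ℤ) :=
    ShortComplex.mk ι (cokernel.π ι) (cokernel.condition ι) with hSdef
  have hex : S.Exact := ShortComplex.exact_of_g_is_cokernel S (cokernelIsCokernel ι)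
  have hS : S.ShortExact := ShortComplex.ShortExact.mk' hex hmono inferInstance
  have hrel : ∀ i : ℤ, (ComplexShape.up ℤ).Rel i (i + 1) := fun i => rfl
  -- δ vanishing
  have hδ : ∀ i : ℤ, hS.δ i (i + 1) (hrel i) = 0 := by
    intro i
    by_cases h : i + 1 = m
    · have hm : Mono (HomologicalComplex.homologyMap ι (i + 1)) := by
        rw [h]; infer_instance
      have := hS.δ_comp i (i + 1) (hrel i)
      rw [← cancel_mono (HomologicalComplex.homologyMap ι (i + 1))]
      rw [zero_comp]; exact this
    · exact (hD (i + 1) h).eq_of_tgt _ _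
  -- homology of cokernel vanishes for i ≤ m
  have hQ : ∀ i ≤ m, IsZero ((cokernel ι).homology i) := by
    intro i hi
    have hex := hS.homology_exact₃ i (i + 1) (hrel i)
    refine hex.isZero_X₂ ?_ (hδ i)
    by_cases h : i = m
    · -- homologyMap (cokernel.π ι) m = 0 since H^m ι epi and ι ≫ π = 0
      subst h
      have hepi : Epi (HomologicalComplex.homologyMap ι i) := inferInstance
      rw [← cancel_epi (HomologicalComplex.homologyMap ι i),
        ← HomologicalComplex.homologyMap_comp]
      simp [hSdef]
      change HomologicalComplex.homologyMap (ι ≫ cokernel.π ι) i = 0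
      simp
    · exact (hC i (lt_of_le_of_ne hi h)).eq_of_src _ _
  -- H^i π iso for i > m
  have hπiso : ∀ i > m, IsIso (HomologicalComplex.homologyMap (cokernel.π ι) i) := by
    intro i hi
    have hDi : IsZero (D.homology i) := hD i (by omega)
    have hmono : Mono (HomologicalComplex.homologyMap (cokernel.π ι) i) :=
      (hS.homology_exact₂ i).mono_g (hDi.eq_of_src _ _)
    have hepi : Epi (HomologicalComplex.homologyMap (cokernel.π ι) i) :=
      (hS.homology_exact₃ i (i + 1) (hrel i)).epi_f (hδ i)
    exact isIso_of_mono_of_epi _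
  -- H^m f iso
  have hfm : IsIso (HomologicalComplex.homologyMap f m) := by
    have h1 : IsIso (HomologicalComplex.homologyMap (ι ≫ f) m) := by
      rw [← quasiIsoAt_iff_isIso_homologyMap]
      infer_instance
    rw [HomologicalComplex.homologyMap_comp] at h1
    exact IsIso.of_isIso_comp_left (HomologicalComplex.homologyMap ι m) _
  rw [quasiIso_iff]
  intro i
  rw [quasiIsoAt_iff_isIso_homologyMap]
  set F := HomologicalComplex.homologyFunctor A (ComplexShape.up ℤ) i with hF
  have : PreservesBinaryBiproduct J (cokernel ι) F :=
    Limits.preservesBinaryBiproduct_of_preservesBiproduct F J (cokernel ι)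
  have key : F.map (biprod.lift f (cokernel.π ι)) =
      biprod.lift (F.map f) (F.map (cokernel.π ι)) ≫ (F.mapBiprod J (cokernel ι)).inv := by
    rw [Iso.eq_comp_inv, Functor.mapBiprod_hom]
    ext
    · simp [← F.map_comp]
    · simp [← F.map_comp]
  show IsIso (F.map (biprod.lift f (cokernel.π ι)))
  rcases lt_trichotomy i m with h | h | h
  · have h1 : IsZero (F.obj C) := hC i h
    have h2 : IsZero (F.obj J) := hJ i (by omega)
    have h3 : IsZero (F.obj (cokernel ι)) := hQ i h.le
    have hz : IsZero (F.obj (J ⊞ cokernel ι)) :=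
      ((biprod_isZero_iff _ _).2 ⟨h2, h3⟩).of_iso (F.mapBiprod J (cokernel ι))
    exact aux_isIso_of_isZero h1 hz _
  · subst h
    have : IsIso (F.map f) := hfm
    have : IsIso (biprod.lift (F.map f) (F.map (cokernel.π ι))) :=
      aux_isIso_biprod_lift_left _ _ (hQ i le_rfl)
    rw [key]; infer_instance
  · have : IsIso (F.map (cokernel.π ι)) := hπiso i h
    have : IsIso (biprod.lift (F.map f) (F.map (cokernel.π ι))) :=
      aux_isIso_biprod_lift_right _ _ (hJ i (by omega))
    rw [key]; infer_instance
end
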